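/- arXiv:1801.07918 — 7 statements merged into one kernel-verified Lean document; each statement's English description precedes it below -/
import Mathlib

section
/- For n ≥ 3 and 1 ≤ i < j ≤ n, the exterior square of the elementary transvection t_{i,j}(ξ) = e + ξ e_{i,j} equals the product ∏_{k=1}^{i-1} t_{{k,i},{k,j}}(ξ) · ∏_{l=i+1}^{j-1} t_{{i,l},{l,j}}(-ξ) · ∏_{m=j+1}^{n} t_{{i,m},{j,m}}(ξ) of elementary transvections in GL_{binom(n,2)}(R), where rows and columns are indexed by 2-element subsets of {1,…,n}. -/
open Matrix

abbrev Idx (n m : ℕ) := {s : Finset (Fin n) // s.card = m}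

def extPow {R : Type*} [CommRing R] (n m : ℕ) (x : Matrix (Fin n) (Fin n) R) :
    Matrix (Idx n m) (Idx n m) R :=
  fun I J => (x.submatrix (⇑(I.1.orderEmbOfFin I.2)) (⇑(J.1.orderEmbOfFin J.2))).det

/-- The 2-element subset `{a, b}` for `a ≠ b`. -/
def pairIdx {n : ℕ} {a b : Fin n} (h : a ≠ b) : Idx n 2 := ⟨{a, b}, Finset.card_pair h⟩

variable {R : Type*} [CommRing R]

/-- The factor `t_{{k,i},{k,j}}(ξ)` for `k < i`. -/
def f₁ {n : ℕ} (i j : Fin n) (hij : i < j) (ξ : R) :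
    {k // k ∈ Finset.Iio i} → Matrix (Idx n 2) (Idx n 2) R :=
  fun k => Matrix.transvection
    (pairIdx (ne_of_lt (Finset.mem_Iio.mp k.2)))
    (pairIdx (ne_of_lt ((Finset.mem_Iio.mp k.2).trans hij))) ξ

/-- The factor `t_{{i,l},{l,j}}(-ξ)` for `i < l < j`. -/
def f₂ {n : ℕ} (i j : Fin n) (hij : i < j) (ξ : R) :
    {l // l ∈ Finset.Ioo i j} → Matrix (Idx n 2) (Idx n 2) R :=
  fun l => Matrix.transvection
    (pairIdx (ne_of_lt (Finset.mem_Ioo.mp l.2).1))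
    (pairIdx (ne_of_lt (Finset.mem_Ioo.mp l.2).2)) (-ξ)

/-- The factor `t_{{i,m},{j,m}}(ξ)` for `j < m`. -/
def f₃ {n : ℕ} (i j : Fin n) (hij : i < j) (ξ : R) :
    {k // k ∈ Finset.Ioi j} → Matrix (Idx n 2) (Idx n 2) R :=
  fun k => Matrix.transvection
    (pairIdx (ne_of_gt (hij.trans (Finset.mem_Ioi.mp k.2))))
    (pairIdx (ne_of_gt (Finset.mem_Ioi.mp k.2))) ξ

/-! ### Auxiliary lemmas -/

lemma key_scalar (ξ : R) (a b c d i j : ℕ) (hab : a < b) (hcd : c < d) (hij : i < j) :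
    ((if a = c then (1:R) else 0) + (if i = a ∧ j = c then ξ else 0)) *
      ((if b = d then 1 else 0) + (if i = b ∧ j = d then ξ else 0)) -
    ((if a = d then 1 else 0) + (if i = a ∧ j = d then ξ else 0)) *
      ((if b = c then 1 else 0) + (if i = b ∧ j = c then ξ else 0)) =
    (if a = c ∧ b = d then 1 else 0) +
    ((if a = c ∧ b = i ∧ d = j then ξ else 0) +
     (if b = c ∧ a = i ∧ d = j then -ξ else 0) +
     (if b = d ∧ a = i ∧ c = j then ξ else 0)) := by
  simp only [add_mul, mul_add, ite_zero_mul_ite_zero, one_mul, mul_one]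
  rw [if_neg (by omega : ¬((i = a ∧ j = c) ∧ i = b ∧ j = d)),
      if_neg (by omega : ¬(a = d ∧ b = c)),
      if_neg (by omega : ¬(a = d ∧ i = b ∧ j = c)),
      if_neg (by omega : ¬((i = a ∧ j = d) ∧ i = b ∧ j = c)),
      if_congr (by omega : (a = c ∧ i = b ∧ j = d) ↔ (a = c ∧ b = i ∧ d = j)) rfl rfl,
      if_congr (by omega : ((i = a ∧ j = c) ∧ b = d) ↔ (b = d ∧ a = i ∧ c = j)) rfl rfl,
      if_congr (by omega : ((i = a ∧ j = d) ∧ b = c) ↔ (b = c ∧ a = i ∧ d = j)) rfl rfl]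
  have : ∀ (P : Prop) [Decidable P], (if P then -ξ else 0) = -(if P then ξ else 0) := by
    intros P _; split <;> simp
  rw [this]
  ring

lemma key_scalar_fin {n : ℕ} (ξ : R) (a b c d i j : Fin n) (hab : a < b) (hcd : c < d)
    (hij : i < j) :
    ((if a = c then (1:R) else 0) + (if i = a ∧ j = c then ξ else 0)) *
      ((if b = d then 1 else 0) + (if i = b ∧ j = d then ξ else 0)) -
    ((if a = d then 1 else 0) + (if i = a ∧ j = d then ξ else 0)) *
      ((if b = c then 1 else 0) + (if i = b ∧ j = c then ξ else 0)) =
    (if a = c ∧ b = d then 1 else 0) +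
    ((if a = c ∧ b = i ∧ d = j then ξ else 0) +
     (if b = c ∧ a = i ∧ d = j then -ξ else 0) +
     (if b = d ∧ a = i ∧ c = j then ξ else 0)) := by
  have := key_scalar ξ a.val b.val c.val d.val i.val j.val hab hcd hij
  simpa only [← Fin.val_inj] using this

lemma idx_lt {n : ℕ} (I : Idx n 2) : I.1.orderEmbOfFin I.2 0 < I.1.orderEmbOfFin I.2 1 :=
  (I.1.orderEmbOfFin I.2).strictMono (by norm_num : (0 : Fin 2) < 1)

lemma idx_val {n : ℕ} (I : Idx n 2) :
    I.1 = {I.1.orderEmbOfFin I.2 0, I.1.orderEmbOfFin I.2 1} := by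
  refine (Finset.eq_of_subset_of_card_le ?_ ?_).symm
  · intro x hx
    simp only [Finset.mem_insert, Finset.mem_singleton] at hx
    rcases hx with rfl | rfl <;> exact Finset.orderEmbOfFin_mem _ _ _
  · rw [I.2, Finset.card_pair (ne_of_lt (idx_lt I))]

lemma pair_eq_pair_iff {n : ℕ} {a b c d : Fin n} (hab : a < b) (hcd : c < d) :
    ({a, b} : Finset (Fin n)) = {c, d} ↔ a = c ∧ b = d := by
  constructor
  · intro h
    have h1 : a = c ∨ a = d := by
      have : a ∈ ({c, d} : Finset (Fin n)) := h ▸ (by simp)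
      simpa using this
    have h2 : b = c ∨ b = d := by
      have : b ∈ ({c, d} : Finset (Fin n)) := h ▸ (by simp)
      simpa using this
    have h3 : c = a ∨ c = b := by
      have : c ∈ ({a, b} : Finset (Fin n)) := h.symm ▸ (by simp)
      simpa using this
    simp only [Fin.ext_iff, Fin.lt_def] at *
    omega
  · rintro ⟨rfl, rfl⟩; rfl

lemma pairIdx_eq_iff {n : ℕ} {x y : Fin n} {hxy : x ≠ y} (hlt : x < y) {I : Idx n 2} :
    pairIdx hxy = I ↔ x = I.1.orderEmbOfFin I.2 0 ∧ y = I.1.orderEmbOfFin I.2 1 := by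
  rw [Subtype.ext_iff]
  show ({x, y} : Finset (Fin n)) = I.1 ↔ _
  constructor
  · intro h
    exact (pair_eq_pair_iff hlt (idx_lt I)).mp (h.trans (idx_val I))
  · rintro ⟨h1, h2⟩
    exact (h1 ▸ h2 ▸ (idx_val I)).symm

lemma pairIdx_eq_iff' {n : ℕ} {x y : Fin n} {hxy : x ≠ y} (hlt : y < x) {I : Idx n 2} :
    pairIdx hxy = I ↔ y = I.1.orderEmbOfFin I.2 0 ∧ x = I.1.orderEmbOfFin I.2 1 := by
  rw [Subtype.ext_iff]
  show ({x, y} : Finset (Fin n)) = I.1 ↔ _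
  rw [Finset.pair_comm]
  constructor
  · intro h
    exact (pair_eq_pair_iff hlt (idx_lt I)).mp (h.trans (idx_val I))
  · rintro ⟨h1, h2⟩
    exact (h1 ▸ h2 ▸ (idx_val I)).symm

lemma stdBasisMatrix_apply' {N : Type*} [DecidableEq N] (X Y I J : N) (ξ : R) :
    Matrix.single X Y ξ I J = if X = I ∧ Y = J then ξ else 0 := rfl

lemma transvection_apply' {N : Type*} [DecidableEq N] [Fintype N] (i j x y : N) (ξ : R) :
    Matrix.transvection i j ξ x y =
      (if x = y then (1:R) else 0) + (if i = x ∧ j = y then ξ else 0) := by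
  simp [Matrix.transvection, Matrix.add_apply, Matrix.one_apply, Matrix.single,
    Matrix.of_apply]

lemma commute_transvection {N : Type*} [DecidableEq N] [Fintype N] {a b c d : N}
    (h1 : b ≠ c) (h2 : d ≠ a) (x y : R) :
    Commute (Matrix.transvection a b x) (Matrix.transvection c d y) := by
  show _ * _ = _ * _
  have hAB : Matrix.single a b x * Matrix.single c d y = 0 :=
    Matrix.single_mul_single_of_ne (h := h1) ..
  have hBA : Matrix.single c d y * Matrix.single a b x = 0 :=
    Matrix.single_mul_single_of_ne (h := h2) ..
  simp only [Matrix.transvection, add_mul, mul_add, one_mul, mul_one, hAB, hBA]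
  abel

lemma noncommProd_transvections {N α : Type*} [DecidableEq N] [Fintype N] (s : Finset α)
    (f : α → Matrix N N R) (r c : α → N) (ξ : α → R)
    (hf : ∀ p, f p = Matrix.transvection (r p) (c p) (ξ p))
    (h : ∀ p q, c p ≠ r q)
    (hc : (s : Set α).Pairwise (Function.onFun Commute f)) :
    s.noncommProd f hc = 1 + ∑ p ∈ s, Matrix.single (r p) (c p) (ξ p) := by
  classical
  revert hc
  refine Finset.induction_on s ?_ ?_
  · intro hc; simp
  · intro p s hp ih hc
    rw [Finset.noncommProd_insert_of_notMem _ _ _ _ hp,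
      ih (hc.mono (by simp only [Finset.coe_insert]; exact Set.subset_insert _ _)),
      Finset.sum_insert hp, hf p, Matrix.transvection]
    have hzero : Matrix.single (r p) (c p) (ξ p) *
        (∑ q ∈ s, Matrix.single (r q) (c q) (ξ q)) = 0 := by
      rw [Finset.mul_sum]
      exact Finset.sum_eq_zero fun q _ => Matrix.single_mul_single_of_ne (h := h p q) ..
    rw [add_mul, mul_add, mul_add, hzero, one_mul, one_mul, mul_one]
    abel

lemma sum_std_mul_sum_std {N α β : Type*} [DecidableEq N] [Fintype N]
    (s : Finset α) (t : Finset β) (r c : α → N) (r' c' : β → N) (ξ : α → R) (η : β → R)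
    (h : ∀ p q, c p ≠ r' q) :
    (∑ p ∈ s, Matrix.single (r p) (c p) (ξ p)) *
      (∑ q ∈ t, Matrix.single (r' q) (c' q) (η q)) = 0 := by
  rw [Finset.sum_mul_sum]
  exact Finset.sum_eq_zero fun p _ =>
    Finset.sum_eq_zero fun q _ => Matrix.single_mul_single_of_ne (h := h p q) ..

lemma one_add_mul₃ {M : Type*} [Ring M] (S₁ S₂ S₃ : M) (e12 : S₁ * S₂ = 0)
    (e13 : S₁ * S₃ = 0) (e23 : S₂ * S₃ = 0) :
    (1 + S₁) * (1 + S₂) * (1 + S₃) = 1 + (S₁ + S₂ + S₃) := by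
  have h : (1 + S₁) * (1 + S₂) * (1 + S₃) =
      1 + (S₁ + S₂ + S₃) + (S₁ * S₂ + S₁ * S₃ + S₂ * S₃ + S₁ * S₂ * S₃) := by
    noncomm_ring
  rw [h, e12, e13, e23, zero_mul]
  abel

/-- Formula (1): the exterior square of an elementary transvection `t_{i,j}(ξ)` (for `i < j`)
is the product of elementary transvections
`∏_{k<i} t_{{k,i},{k,j}}(ξ) · ∏_{i<l<j} t_{{i,l},{l,j}}(-ξ) · ∏_{j<m} t_{{i,m},{j,m}}(ξ)`;
the factors inside each product pairwise commute, so the products are well defined. -/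
theorem extPow_two_transvection {n : ℕ} (hn : 3 ≤ n) (i j : Fin n) (hij : i < j) (ξ : R) :
    ∃ (h₁ : ((Finset.Iio i).attach : Set _).Pairwise (Function.onFun Commute (f₁ i j hij ξ)))
      (h₂ : ((Finset.Ioo i j).attach : Set _).Pairwise (Function.onFun Commute (f₂ i j hij ξ)))
      (h₃ : ((Finset.Ioi j).attach : Set _).Pairwise (Function.onFun Commute (f₃ i j hij ξ))),
      extPow n 2 (Matrix.transvection i j ξ) =
        (Finset.Iio i).attach.noncommProd (f₁ i j hij ξ) h₁ *
        (Finset.Ioo i j).attach.noncommProd (f₂ i j hij ξ) h₂ *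
        (Finset.Ioi j).attach.noncommProd (f₃ i j hij ξ) h₃ := by
  classical
  have hne : ∀ {X Y : Idx n 2}, j ∈ X.1 → j ∉ Y.1 → X ≠ Y := fun hX hY h => hY (h ▸ hX)
  -- membership facts for the three families
  have jm₁ : ∀ p : {k // k ∈ Finset.Iio i},
      j ∈ (pairIdx (ne_of_lt ((Finset.mem_Iio.mp p.2).trans hij))).1 := fun p => by
    simp [pairIdx]
  have jn₁ : ∀ p : {k // k ∈ Finset.Iio i},
      j ∉ (pairIdx (ne_of_lt (Finset.mem_Iio.mp p.2))).1 := fun p => by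
    have h := Finset.mem_Iio.mp p.2
    simp only [pairIdx, Finset.mem_insert, Finset.mem_singleton]
    push_neg
    exact ⟨(h.trans hij).ne', hij.ne'⟩
  have jm₂ : ∀ p : {l // l ∈ Finset.Ioo i j},
      j ∈ (pairIdx (ne_of_lt (Finset.mem_Ioo.mp p.2).2)).1 := fun p => by
    simp [pairIdx]
  have jn₂ : ∀ p : {l // l ∈ Finset.Ioo i j},
      j ∉ (pairIdx (ne_of_lt (Finset.mem_Ioo.mp p.2).1)).1 := fun p => by
    have h := Finset.mem_Ioo.mp p.2
    simp only [pairIdx, Finset.mem_insert, Finset.mem_singleton]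
    push_neg
    exact ⟨hij.ne', h.2.ne'⟩
  have jm₃ : ∀ p : {k // k ∈ Finset.Ioi j},
      j ∈ (pairIdx (ne_of_gt (Finset.mem_Ioi.mp p.2))).1 := fun p => by
    simp [pairIdx]
  have jn₃ : ∀ p : {k // k ∈ Finset.Ioi j},
      j ∉ (pairIdx (ne_of_gt (hij.trans (Finset.mem_Ioi.mp p.2)))).1 := fun p => by
    have h := Finset.mem_Ioi.mp p.2
    simp only [pairIdx, Finset.mem_insert, Finset.mem_singleton]
    push_neg
    exact ⟨h.ne, hij.ne'⟩
  have h₁ : ((Finset.Iio i).attach : Set _).Pairwise (Function.onFun Commute (f₁ i j hij ξ)) :=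
    fun p _ q _ _ => commute_transvection (hne (jm₁ p) (jn₁ q)) (hne (jm₁ q) (jn₁ p)) ξ ξ
  have h₂ : ((Finset.Ioo i j).attach : Set _).Pairwise (Function.onFun Commute (f₂ i j hij ξ)) :=
    fun p _ q _ _ => commute_transvection (hne (jm₂ p) (jn₂ q)) (hne (jm₂ q) (jn₂ p)) (-ξ) (-ξ)
  have h₃ : ((Finset.Ioi j).attach : Set _).Pairwise (Function.onFun Commute (f₃ i j hij ξ)) :=
    fun p _ q _ _ => commute_transvection (hne (jm₃ p) (jn₃ q)) (hne (jm₃ q) (jn₃ p)) ξ ξ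
  refine ⟨h₁, h₂, h₃, ?_⟩
  rw [noncommProd_transvections _ (f₁ i j hij ξ)
        (fun p => pairIdx (ne_of_lt (Finset.mem_Iio.mp p.2)))
        (fun p => pairIdx (ne_of_lt ((Finset.mem_Iio.mp p.2).trans hij)))
        (fun _ => ξ) (fun p => rfl) (fun p q => hne (jm₁ p) (jn₁ q)) h₁,
      noncommProd_transvections _ (f₂ i j hij ξ)
        (fun p => pairIdx (ne_of_lt (Finset.mem_Ioo.mp p.2).1))
        (fun p => pairIdx (ne_of_lt (Finset.mem_Ioo.mp p.2).2))
        (fun _ => -ξ) (fun p => rfl) (fun p q => hne (jm₂ p) (jn₂ q)) h₂,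
      noncommProd_transvections _ (f₃ i j hij ξ)
        (fun p => pairIdx (ne_of_gt (hij.trans (Finset.mem_Ioi.mp p.2))))
        (fun p => pairIdx (ne_of_gt (Finset.mem_Ioi.mp p.2)))
        (fun _ => ξ) (fun p => rfl) (fun p q => hne (jm₃ p) (jn₃ q)) h₃]
  have e12 := sum_std_mul_sum_std ((Finset.Iio i).attach) ((Finset.Ioo i j).attach)
        (fun p => pairIdx (ne_of_lt (Finset.mem_Iio.mp p.2)))
        (fun p => pairIdx (ne_of_lt ((Finset.mem_Iio.mp p.2).trans hij)))
        (fun p => pairIdx (ne_of_lt (Finset.mem_Ioo.mp p.2).1))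
        (fun p => pairIdx (ne_of_lt (Finset.mem_Ioo.mp p.2).2))
        (fun _ => ξ) (fun _ => -ξ) (fun p q => hne (jm₁ p) (jn₂ q))
  have e13 := sum_std_mul_sum_std ((Finset.Iio i).attach) ((Finset.Ioi j).attach)
        (fun p => pairIdx (ne_of_lt (Finset.mem_Iio.mp p.2)))
        (fun p => pairIdx (ne_of_lt ((Finset.mem_Iio.mp p.2).trans hij)))
        (fun p => pairIdx (ne_of_gt (hij.trans (Finset.mem_Ioi.mp p.2))))
        (fun p => pairIdx (ne_of_gt (Finset.mem_Ioi.mp p.2)))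
        (fun _ => ξ) (fun _ => ξ) (fun p q => hne (jm₁ p) (jn₃ q))
  have e23 := sum_std_mul_sum_std ((Finset.Ioo i j).attach) ((Finset.Ioi j).attach)
        (fun p => pairIdx (ne_of_lt (Finset.mem_Ioo.mp p.2).1))
        (fun p => pairIdx (ne_of_lt (Finset.mem_Ioo.mp p.2).2))
        (fun p => pairIdx (ne_of_gt (hij.trans (Finset.mem_Ioi.mp p.2))))
        (fun p => pairIdx (ne_of_gt (Finset.mem_Ioi.mp p.2)))
        (fun _ => -ξ) (fun _ => ξ) (fun p q => hne (jm₂ p) (jn₃ q))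
  rw [one_add_mul₃ _ _ _ e12 e13 e23]
  ext I J
  simp only [extPow, Matrix.det_fin_two, Matrix.submatrix_apply, transvection_apply',
    Matrix.add_apply, Matrix.one_apply, Matrix.sum_apply, stdBasisMatrix_apply']
  have hab := idx_lt I
  have hcd := idx_lt J
  set a := I.1.orderEmbOfFin I.2 0 with ha
  set b := I.1.orderEmbOfFin I.2 1 with hb
  set c := J.1.orderEmbOfFin J.2 0 with hc
  set d := J.1.orderEmbOfFin J.2 1 with hd
  have hchar₁ : ∀ p : {k // k ∈ Finset.Iio i},
      ((pairIdx (ne_of_lt (Finset.mem_Iio.mp p.2)) = I ∧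
        pairIdx (ne_of_lt ((Finset.mem_Iio.mp p.2).trans hij)) = J)
        ↔ (p.1 = a ∧ i = b ∧ p.1 = c ∧ j = d)) := by
    intro p
    rw [pairIdx_eq_iff (Finset.mem_Iio.mp p.2),
      pairIdx_eq_iff ((Finset.mem_Iio.mp p.2).trans hij), ← ha, ← hb, ← hc, ← hd]
    tauto
  have hchar₂ : ∀ p : {l // l ∈ Finset.Ioo i j},
      ((pairIdx (ne_of_lt (Finset.mem_Ioo.mp p.2).1) = I ∧
        pairIdx (ne_of_lt (Finset.mem_Ioo.mp p.2).2) = J)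
        ↔ (i = a ∧ p.1 = b ∧ p.1 = c ∧ j = d)) := by
    intro p
    rw [pairIdx_eq_iff (Finset.mem_Ioo.mp p.2).1,
      pairIdx_eq_iff (Finset.mem_Ioo.mp p.2).2, ← ha, ← hb, ← hc, ← hd]
    tauto
  have hchar₃ : ∀ p : {k // k ∈ Finset.Ioi j},
      ((pairIdx (ne_of_gt (hij.trans (Finset.mem_Ioi.mp p.2))) = I ∧
        pairIdx (ne_of_gt (Finset.mem_Ioi.mp p.2)) = J)
        ↔ (i = a ∧ p.1 = b ∧ j = c ∧ p.1 = d)) := by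
    intro p
    rw [pairIdx_eq_iff' (hij.trans (Finset.mem_Ioi.mp p.2)),
      pairIdx_eq_iff' (Finset.mem_Ioi.mp p.2), ← ha, ← hb, ← hc, ← hd]
    tauto
  have hS1 : (∑ p ∈ (Finset.Iio i).attach,
      if pairIdx (ne_of_lt (Finset.mem_Iio.mp p.2)) = I ∧
         pairIdx (ne_of_lt ((Finset.mem_Iio.mp p.2).trans hij)) = J then ξ else 0)
      = if a = c ∧ b = i ∧ d = j then ξ else 0 := by
    by_cases hcond : a = c ∧ b = i ∧ d = j
    · have hamem : a ∈ Finset.Iio i := Finset.mem_Iio.mpr (by rw [← hcond.2.1]; exact hab)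
      rw [if_pos hcond]
      refine (Finset.sum_eq_single_of_mem (⟨a, hamem⟩ : {k // k ∈ Finset.Iio i})
        (Finset.mem_attach _ _) ?_).trans ?_
      · intro q _ hq
        exact if_neg fun hcontra => hq (Subtype.ext ((hchar₁ q).mp hcontra).1)
      · exact if_pos ((hchar₁ _).mpr ⟨rfl, hcond.2.1.symm, hcond.1, hcond.2.2.symm⟩)
    · rw [if_neg hcond]
      refine Finset.sum_eq_zero fun p _ => if_neg fun hcontra => ?_
      obtain ⟨u1, u2, u3, u4⟩ := (hchar₁ p).mp hcontra
      exact hcond ⟨u1 ▸ u3, u2.symm, u4.symm⟩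
  have hS2 : (∑ p ∈ (Finset.Ioo i j).attach,
      if pairIdx (ne_of_lt (Finset.mem_Ioo.mp p.2).1) = I ∧
         pairIdx (ne_of_lt (Finset.mem_Ioo.mp p.2).2) = J then -ξ else 0)
      = if b = c ∧ a = i ∧ d = j then -ξ else 0 := by
    by_cases hcond : b = c ∧ a = i ∧ d = j
    · have hbmem : b ∈ Finset.Ioo i j := Finset.mem_Ioo.mpr
        ⟨by rw [← hcond.2.1]; exact hab, by rw [hcond.1, ← hcond.2.2]; exact hcd⟩
      rw [if_pos hcond]
      refine (Finset.sum_eq_single_of_mem (⟨b, hbmem⟩ : {l // l ∈ Finset.Ioo i j})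
        (Finset.mem_attach _ _) ?_).trans ?_
      · intro q _ hq
        exact if_neg fun hcontra => hq (Subtype.ext ((hchar₂ q).mp hcontra).2.1)
      · exact if_pos ((hchar₂ _).mpr ⟨hcond.2.1.symm, rfl, hcond.1, hcond.2.2.symm⟩)
    · rw [if_neg hcond]
      refine Finset.sum_eq_zero fun p _ => if_neg fun hcontra => ?_
      obtain ⟨u1, u2, u3, u4⟩ := (hchar₂ p).mp hcontra
      exact hcond ⟨u2 ▸ u3, u1.symm, u4.symm⟩
  have hS3 : (∑ p ∈ (Finset.Ioi j).attach,
      if pairIdx (ne_of_gt (hij.trans (Finset.mem_Ioi.mp p.2))) = I ∧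
         pairIdx (ne_of_gt (Finset.mem_Ioi.mp p.2)) = J then ξ else 0)
      = if b = d ∧ a = i ∧ c = j then ξ else 0 := by
    by_cases hcond : b = d ∧ a = i ∧ c = j
    · have hbmem : b ∈ Finset.Ioi j := Finset.mem_Ioi.mpr
        (by rw [← hcond.2.2, hcond.1]; exact hcd)
      rw [if_pos hcond]
      refine (Finset.sum_eq_single_of_mem (⟨b, hbmem⟩ : {k // k ∈ Finset.Ioi j})
        (Finset.mem_attach _ _) ?_).trans ?_
      · intro q _ hq
        exact if_neg fun hcontra => hq (Subtype.ext ((hchar₃ q).mp hcontra).2.1)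
      · exact if_pos ((hchar₃ _).mpr ⟨hcond.2.1.symm, rfl, hcond.2.2.symm, hcond.1⟩)
    · rw [if_neg hcond]
      refine Finset.sum_eq_zero fun p _ => if_neg fun hcontra => ?_
      obtain ⟨u1, u2, u3, u4⟩ := (hchar₃ p).mp hcontra
      exact hcond ⟨u2 ▸ u4, u1.symm, u3.symm⟩
  rw [hS1, hS2, hS3]
  have hIJ : (I = J) ↔ (a = c ∧ b = d) := by
    rw [Subtype.ext_iff]
    constructor
    · intro h
      exact (pair_eq_pair_iff hab hcd).mp ((idx_val I).symm.trans (h.trans (idx_val J)))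
    · rintro ⟨h1, h2⟩
      refine (idx_val I).trans ?_
      show ({a, b} : Finset (Fin n)) = J.1
      rw [h1, h2]
      exact (idx_val J).symm
  rw [if_congr hIJ rfl rfl]
  exact key_scalar_fin ξ a b c d i j hab hcd hij
end

section
/- For n ≥ 3, 1 ≤ i < j ≤ n, and any ξ ∈ R, the m-th exterior power of the elementary transvection t_{i,j}(ξ) equals the product over all (m−1)-element subsets L of {1,…,n}\{i,j} of the elementary transvections t_{L∪{i}, L∪{j}}(sign(L,i,j)·ξ) in GL_{binom(n,m)}(R), where sign(L,i,j) is the sign of the permutation arranging the sequence (L,i,j) into increasing order; in particular all these factors pairwise commute. -/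
open Matrix

/-- The sign of the permutation arranging the sequence `(L, i, j)` (with `L` listed in
increasing order) into increasing order: `i` has to jump over the elements of `L` greater
than `i`, and `j` over those greater than `j`. -/
def signLij (n : ℕ) (L : Finset (Fin n)) (i j : Fin n) : ℤ :=
  (-1) ^ ((L.filter (fun a => i < a)).card + (L.filter (fun a => j < a)).card)

/-- The `m`-element subset `L ∪ {a}` for `a ∉ L`, `|L| = m - 1`. -/
def insertIdx {n m : ℕ} (hm : 1 ≤ m) (a : Fin n) (L : Finset (Fin n)) (hL : L.card = m - 1)
    (ha : a ∉ L) : Idx n m :=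
  ⟨insert a L, by rw [Finset.card_insert_of_notMem ha, hL]; omega⟩

/-- The factor `t_{L∪{i}, L∪{j}}(sign(L,i,j)·ξ)` indexed by an `(m-1)`-element subset
`L ⊆ {1,…,n} \ {i,j}`. -/
def fGen {R : Type*} [CommRing R] {n m : ℕ} (hm : 1 ≤ m) (i j : Fin n) (ξ : R) :
    {L // L ∈ Finset.powersetCard (m - 1) ({i, j}ᶜ : Finset (Fin n))} →
      Matrix (Idx n m) (Idx n m) R :=
  fun L => Matrix.transvection
    (insertIdx hm i L.1 (Finset.mem_powersetCard.mp L.2).2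
      (fun hi => by simpa using (Finset.mem_powersetCard.mp L.2).1 hi))
    (insertIdx hm j L.1 (Finset.mem_powersetCard.mp L.2).2
      (fun hj => by simpa using (Finset.mem_powersetCard.mp L.2).1 hj))
    ((signLij n L.1 i j : R) * ξ)


section Helpers

variable {R : Type*} [CommRing R] {n : ℕ}

/-- noncommProd of `1 + f a` with all pairwise (and self) products of `f` zero. -/
lemma noncommProd_one_add_aux {M : Type*} [Ring M] {α : Type*} (s : Finset α) (f : α → M)
    (h : ∀ a ∈ s, ∀ b ∈ s, f a * f b = 0) (hc) :
    s.noncommProd (fun a => 1 + f a) hc = 1 + ∑ a ∈ s, f a := by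
  induction s using Finset.cons_induction with
  | empty => simp
  | cons a s ha ih =>
    rw [Finset.noncommProd_cons, ih (fun x hx y hy =>
      h x (Finset.mem_cons.2 (.inr hx)) y (Finset.mem_cons.2 (.inr hy)))]
    rw [Finset.sum_cons, mul_add, mul_one, add_mul, one_mul, Finset.mul_sum]
    have : ∑ x ∈ s, f a * f x = 0 := Finset.sum_eq_zero fun x hx =>
      h a (Finset.mem_cons_self a s) x (Finset.mem_cons.2 (.inr hx))
    rw [this]
    abel

lemma noncommProd_one_add {M : Type*} [Ring M] {α : Type*} (s : Finset α) (f : α → M)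
    (h : ∀ a ∈ s, ∀ b ∈ s, f a * f b = 0) :
    ∃ hc : (s : Set α).Pairwise (Function.onFun Commute fun a => 1 + f a),
      s.noncommProd (fun a => 1 + f a) hc = 1 + ∑ a ∈ s, f a := by
  have key : ∀ a ∈ s, ∀ b ∈ s, (1 + f a) * (1 + f b) = 1 + (f a + f b) := by
    intro a ha b hb
    rw [mul_add, mul_one, add_mul, one_mul, h a ha b hb]
    abel
  have hc : (s : Set α).Pairwise (Function.onFun Commute fun a => 1 + f a) := by
    intro a ha b hb _
    unfold Function.onFun Commute SemiconjBy
    rw [key a ha b hb, key b hb a ha, add_comm (f a)]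
  exact ⟨hc, noncommProd_one_add_aux s f h hc⟩

lemma det_one_submatrix {k : ℕ} {s t : Finset (Fin n)} (hs : s.card = k) (ht : t.card = k)
    {f g : Fin k → Fin n} (hf : StrictMono f) (hg : StrictMono g)
    (hfs : ∀ x, f x ∈ s) (hgt : ∀ x, g x ∈ t) :
    ((1 : Matrix (Fin n) (Fin n) R).submatrix f g).det = if s = t then 1 else 0 := by
  split
  · next hst =>
    subst hst
    have hfg : f = g := by
      rw [Finset.orderEmbOfFin_unique hs hfs hf, Finset.orderEmbOfFin_unique hs hgt hg]
    subst hfg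
    have : (1 : Matrix (Fin n) (Fin n) R).submatrix f f = 1 := by
      ext a b
      simp [Matrix.one_apply, hf.injective.eq_iff]
    rw [this, det_one]
  · next hst =>
    have hns : ¬ s ⊆ t := fun hsub => hst (Finset.eq_of_subset_of_card_le hsub (le_of_eq (ht.trans hs.symm)))
    obtain ⟨x, hxs, hxt⟩ := Finset.not_subset.mp hns
    have : x ∈ Set.range f := by
      rw [Finset.orderEmbOfFin_unique hs hfs hf]
      rw [Finset.range_orderEmbOfFin]
      exact hxs
    obtain ⟨a, rfl⟩ := this
    refine Matrix.det_eq_zero_of_row_eq_zero a fun b => ?_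
    simp only [Matrix.submatrix_apply, Matrix.one_apply]
    rw [if_neg]
    intro hgb
    exact hxt (hgb ▸ hgt b)

lemma filter_card_strictMono {k : ℕ} {s : Finset (Fin n)} (hs : s.card = k)
    {f : Fin k → Fin n} (hf : StrictMono f) (hfs : ∀ x, f x ∈ s) (a : Fin k) :
    (s.filter (· < f a)).card = a := by
  have himg : Finset.univ.image f = s := by
    refine Finset.eq_of_subset_of_card_le (fun x hx => ?_) ?_
    · obtain ⟨b, _, rfl⟩ := Finset.mem_image.mp hx
      exact hfs b
    · rw [hs, Finset.card_image_of_injective _ hf.injective, Finset.card_univ, Fintype.card_fin]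
  rw [← himg, Finset.filter_image, Finset.card_image_of_injective _ hf.injective]
  have : (Finset.univ.filter fun b => f b < f a) = Finset.Iio a := by
    ext b; simp [hf.lt_iff_lt]
  rw [this, Fin.card_Iio]

lemma filter_lt_add_filter_gt {k : ℕ} {s : Finset (Fin n)} (hs : s.card = k) {i : Fin n}
    (hi : i ∈ s) :
    (s.filter (· < i)).card + (s.filter (i < ·)).card + 1 = k := by
  have h1 : (s.erase i).filter (· < i) = s.filter (· < i) := by
    ext x
    simp only [Finset.mem_filter, Finset.mem_erase]
    constructor
    · rintro ⟨⟨_, hx⟩, h⟩; exact ⟨hx, h⟩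
    · rintro ⟨hx, h⟩; exact ⟨⟨ne_of_lt h, hx⟩, h⟩
  have h2 : (s.erase i).filter (fun x => ¬ x < i) = s.filter (i < ·) := by
    ext x
    simp only [Finset.mem_filter, Finset.mem_erase]
    constructor
    · rintro ⟨⟨hne, hx⟩, h⟩; exact ⟨hx, lt_of_le_of_ne (not_lt.mp h) (Ne.symm hne)⟩
    · rintro ⟨hx, h⟩; exact ⟨⟨(ne_of_lt h).symm, hx⟩, not_lt.mpr (le_of_lt h)⟩
  have h3 := Finset.card_filter_add_card_filter_not (s := s.erase i) (p := (· < i))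
  rw [h1, h2] at h3
  rw [h3, Finset.card_erase_of_mem hi, hs]
  have : 1 ≤ k := hs ▸ Finset.card_pos.mpr ⟨i, hi⟩
  omega

lemma neg_one_pow_parity {p q : ℕ} (h : p % 2 = q % 2) : (-1 : R) ^ p = (-1) ^ q := by
  rcases Nat.even_or_odd p with hp | hp
  · rw [hp.neg_one_pow, (Nat.even_iff.mpr (by rw [← h]; exact Nat.even_iff.mp hp)).neg_one_pow]
  · rw [hp.neg_one_pow, (Nat.odd_iff.mpr (by rw [← h]; exact Nat.odd_iff.mp hp)).neg_one_pow]

end Helpers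

lemma extPow_transvection_apply {R : Type*} [CommRing R] {n m : ℕ} (hm : 1 ≤ m)
    {i j : Fin n} (hij : i ≠ j) (ξ : R) (I J : Idx n m) :
    extPow n m (Matrix.transvection i j ξ) I J =
      (if I = J then 1 else 0) +
      (if i ∈ I.1 ∧ j ∈ J.1 ∧ I.1.erase i = J.1.erase j
        then (signLij n (I.1.erase i) i j : R) * ξ else 0) := by
  obtain ⟨k, rfl⟩ : ∃ k, m = k + 1 := ⟨m - 1, by omega⟩
  set f := I.1.orderEmbOfFin I.2 with hf
  set g := J.1.orderEmbOfFin J.2 with hg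
  have hIJ : (I = J) ↔ (I.1 = J.1) := Subtype.ext_iff
  have hdiag : ((1 : Matrix (Fin n) (Fin n) R).submatrix ⇑f ⇑g).det
      = if I.1 = J.1 then 1 else 0 :=
    det_one_submatrix I.2 J.2 f.strictMono g.strictMono
      (fun x => I.1.orderEmbOfFin_mem I.2 x) (fun x => J.1.orderEmbOfFin_mem J.2 x)
  by_cases hi : i ∈ I.1
  swap
  · -- i ∉ I : the perturbation vanishes
    have hz : (Matrix.transvection i j ξ).submatrix ⇑f ⇑g
        = (1 : Matrix (Fin n) (Fin n) R).submatrix ⇑f ⇑g := by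
      ext a b
      simp only [Matrix.submatrix_apply, Matrix.transvection, Matrix.add_apply,
        Matrix.single, Matrix.of_apply]
      rw [if_neg, add_zero]
      rintro ⟨rfl, -⟩
      exact hi (I.1.orderEmbOfFin_mem I.2 a)
    rw [extPow, hz, hdiag]
    rw [if_neg (show ¬(i ∈ I.1 ∧ j ∈ J.1 ∧ (I.1.erase i = J.1.erase j)) from fun h => hi h.1),
      add_zero]
    exact if_congr hIJ.symm rfl rfl
  by_cases hj : j ∈ J.1
  swap
  · have hz : (Matrix.transvection i j ξ).submatrix ⇑f ⇑g
        = (1 : Matrix (Fin n) (Fin n) R).submatrix ⇑f ⇑g := by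
      ext a b
      simp only [Matrix.submatrix_apply, Matrix.transvection, Matrix.add_apply,
        Matrix.single, Matrix.of_apply]
      rw [if_neg, add_zero]
      rintro ⟨-, rfl⟩
      exact hj (J.1.orderEmbOfFin_mem J.2 b)
    rw [extPow, hz, hdiag]
    rw [if_neg (show ¬(i ∈ I.1 ∧ j ∈ J.1 ∧ (I.1.erase i = J.1.erase j)) from fun h => hj h.2.1),
      add_zero]
    exact if_congr hIJ.symm rfl rfl
  -- main case : i ∈ I, j ∈ J
  obtain ⟨a0, ha0⟩ : ∃ a0, f a0 = i := by
    have : i ∈ Set.range ⇑f := by rw [hf, Finset.range_orderEmbOfFin]; exact_mod_cast hi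
    exact this
  obtain ⟨b0, hb0⟩ : ∃ b0, g b0 = j := by
    have : j ∈ Set.range ⇑g := by rw [hg, Finset.range_orderEmbOfFin]; exact_mod_cast hj
    exact this
  set S := (1 : Matrix (Fin n) (Fin n) R).submatrix ⇑f ⇑g with hS
  have hM : (Matrix.transvection i j ξ).submatrix ⇑f ⇑g
      = S.updateRow a0 (S a0 + Pi.single b0 ξ) := by
    ext a b
    rw [Matrix.updateRow_apply]
    by_cases hA : a = a0
    · subst hA
      simp only [Matrix.submatrix_apply, Matrix.transvection, Matrix.add_apply,
        Matrix.single, Matrix.of_apply, if_pos rfl, hS, Pi.add_apply]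
      congr 1
      rw [Pi.single_apply]
      by_cases hB : b = b0
      · subst hB; rw [if_pos rfl, if_pos ⟨ha0.symm, hb0.symm⟩]
      · rw [if_neg hB, if_neg]
        rintro ⟨-, hjb⟩
        exact hB (g.injective (hb0.trans hjb)).symm
    · simp only [Matrix.submatrix_apply, Matrix.transvection, Matrix.add_apply,
        Matrix.single, Matrix.of_apply, if_neg hA, hS]
      rw [if_neg, add_zero]
      rintro ⟨hia, -⟩
      exact hA (f.injective (ha0.trans hia).symm)
  have hsingle : (Pi.single b0 ξ : Fin (k+1) → R) = ξ • (Pi.single b0 (1:R) : Fin (k+1) → R) := by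
    funext b
    rw [Pi.smul_apply, Pi.single_apply, Pi.single_apply]
    split <;> simp
  rw [extPow, hM, Matrix.det_updateRow_add, Matrix.updateRow_eq_self, hdiag, hsingle,
    Matrix.det_updateRow_smul]
  set T := S.updateRow a0 (Pi.single b0 (1 : R)) with hT
  have hTrow : ∀ b, T a0 b = if b = b0 then 1 else 0 := by
    intro b; rw [hT, Matrix.updateRow_self, Pi.single_apply]
  have hdet : T.det = (-1 : R) ^ ((a0 : ℕ) + (b0 : ℕ)) *
      (if I.1.erase i = J.1.erase j then 1 else 0) := by
    rw [Matrix.det_succ_row T a0]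
    rw [Finset.sum_eq_single b0]
    · rw [hTrow, if_pos rfl, mul_one]
      congr 1
      have hsub : T.submatrix a0.succAbove b0.succAbove
          = (1 : Matrix (Fin n) (Fin n) R).submatrix (⇑f ∘ a0.succAbove) (⇑g ∘ b0.succAbove) := by
        ext a b
        rw [Matrix.submatrix_apply, hT, Matrix.updateRow_ne (Fin.succAbove_ne a0 a)]
        rfl
      rw [hsub]
      exact det_one_submatrix
        (by rw [Finset.card_erase_of_mem hi, I.2]; omega)
        (by rw [Finset.card_erase_of_mem hj, J.2]; omega)
        (f.strictMono.comp (Fin.strictMono_succAbove a0))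
        (g.strictMono.comp (Fin.strictMono_succAbove b0))
        (fun x => Finset.mem_erase.mpr ⟨by
          rw [← ha0]; exact fun hh => Fin.succAbove_ne a0 x (f.injective hh),
          I.1.orderEmbOfFin_mem I.2 _⟩)
        (fun x => Finset.mem_erase.mpr ⟨by
          rw [← hb0]; exact fun hh => Fin.succAbove_ne b0 x (g.injective hh),
          J.1.orderEmbOfFin_mem J.2 _⟩)
    · intro b _ hb
      rw [hTrow, if_neg hb, mul_zero, zero_mul]
    · intro hb; exact absurd (Finset.mem_univ b0) hb
  rw [hdet]
  refine congrArg₂ (· + ·) (if_congr hIJ.symm rfl rfl) ?_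
  by_cases herase : I.1.erase i = J.1.erase j
  · rw [if_pos herase, if_pos ⟨hi, hj, herase⟩, mul_one]
    -- sign computation
    have ha0v : (I.1.filter (· < i)).card = (a0 : ℕ) := by
      rw [← ha0]
      exact filter_card_strictMono I.2 f.strictMono (fun x => I.1.orderEmbOfFin_mem I.2 x) a0
    have hb0v : (J.1.filter (· < j)).card = (b0 : ℕ) := by
      rw [← hb0]
      exact filter_card_strictMono J.2 g.strictMono (fun x => J.1.orderEmbOfFin_mem J.2 x) b0
    have htri1 := filter_lt_add_filter_gt I.2 hi
    have htri2 := filter_lt_add_filter_gt J.2 hj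
    have he1 : (I.1.erase i).filter (fun a => i < a) = I.1.filter (fun a => i < a) := by
      ext x
      simp only [Finset.mem_filter, Finset.mem_erase]
      exact ⟨fun ⟨⟨_, hx⟩, h⟩ => ⟨hx, h⟩, fun ⟨hx, h⟩ => ⟨⟨(ne_of_lt h).symm, hx⟩, h⟩⟩
    have he2 : (I.1.erase i).filter (fun a => j < a) = J.1.filter (fun a => j < a) := by
      rw [herase]
      ext x
      simp only [Finset.mem_filter, Finset.mem_erase]
      exact ⟨fun ⟨⟨_, hx⟩, h⟩ => ⟨hx, h⟩, fun ⟨hx, h⟩ => ⟨⟨(ne_of_lt h).symm, hx⟩, h⟩⟩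
    rw [signLij, he1, he2]
    push_cast
    rw [mul_comm]
    congr 1
    exact neg_one_pow_parity (by omega)
  · rw [if_neg herase, if_neg (fun h => herase h.2.2), mul_zero, mul_zero]

def AMat {R : Type*} [CommRing R] {n m : ℕ} (hm : 1 ≤ m) (i j : Fin n) (ξ : R) :
    {L // L ∈ Finset.powersetCard (m - 1) ({i, j}ᶜ : Finset (Fin n))} →
      Matrix (Idx n m) (Idx n m) R :=
  fun L => Matrix.single
    (insertIdx hm i L.1 (Finset.mem_powersetCard.mp L.2).2
      (fun hi => by simpa using (Finset.mem_powersetCard.mp L.2).1 hi))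
    (insertIdx hm j L.1 (Finset.mem_powersetCard.mp L.2).2
      (fun hj => by simpa using (Finset.mem_powersetCard.mp L.2).1 hj))
    ((signLij n L.1 i j : R) * ξ)

lemma fGen_eq_one_add {R : Type*} [CommRing R] {n m : ℕ} (hm : 1 ≤ m) (i j : Fin n) (ξ : R) :
    fGen hm i j ξ = fun L => 1 + AMat hm i j ξ L := rfl

lemma AMat_mul_zero {R : Type*} [CommRing R] {n m : ℕ} (hm : 1 ≤ m) {i j : Fin n}
    (hij : i ≠ j) (ξ : R) (L L' : {L // L ∈ Finset.powersetCard (m - 1) ({i, j}ᶜ : Finset (Fin n))}) :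
    AMat hm i j ξ L * AMat hm i j ξ L' = 0 := by
  apply Matrix.single_mul_single_of_ne
  intro h
  have hval : (insert j L.1 : Finset (Fin n)) = insert i L'.1 := congrArg Subtype.val h
  have hjmem : j ∈ (insert i L'.1 : Finset (Fin n)) :=
    hval ▸ Finset.mem_insert_self j L.1
  rcases Finset.mem_insert.mp hjmem with h' | h'
  · exact hij h'.symm
  · simpa using (Finset.mem_powersetCard.mp L'.2).1 h'

lemma sum_AMat_apply {R : Type*} [CommRing R] {n m : ℕ} (hm : 1 ≤ m) {i j : Fin n}
    (hij : i ≠ j) (ξ : R) (I J : Idx n m) :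
    ∑ L ∈ (Finset.powersetCard (m - 1) ({i, j}ᶜ : Finset (Fin n))).attach,
        AMat hm i j ξ L I J =
      (if i ∈ I.1 ∧ j ∈ J.1 ∧ I.1.erase i = J.1.erase j
        then (signLij n (I.1.erase i) i j : R) * ξ else 0) := by
  have hnotmem : ∀ (L : {L // L ∈ Finset.powersetCard (m - 1) ({i, j}ᶜ : Finset (Fin n))}),
      i ∉ L.1 ∧ j ∉ L.1 := by
    intro L
    constructor
    · intro hk; simpa using (Finset.mem_powersetCard.mp L.2).1 hk
    · intro hk; simpa using (Finset.mem_powersetCard.mp L.2).1 hk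
  have hA : ∀ (L : {L // L ∈ Finset.powersetCard (m - 1) ({i, j}ᶜ : Finset (Fin n))}),
      AMat hm i j ξ L I J =
        if (insert i L.1 : Finset (Fin n)) = I.1 ∧ (insert j L.1 : Finset (Fin n)) = J.1
          then (signLij n L.1 i j : R) * ξ else 0 := by
    intro L
    simp only [AMat, Matrix.single, Matrix.of_apply]
    refine if_congr ?_ rfl rfl
    exact and_congr Subtype.ext_iff Subtype.ext_iff
  rw [Finset.sum_congr rfl (fun L _ => hA L)]
  by_cases hC : i ∈ I.1 ∧ j ∈ J.1 ∧ I.1.erase i = J.1.erase j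
  · obtain ⟨hi, hj, he⟩ := hC
    have hjI : j ∉ I.1.erase i := by rw [he]; exact Finset.notMem_erase j J.1
    have hL0mem : I.1.erase i ∈ Finset.powersetCard (m - 1) ({i, j}ᶜ : Finset (Fin n)) := by
      rw [Finset.mem_powersetCard]
      constructor
      · intro x hx
        obtain ⟨hxi, hxI⟩ := Finset.mem_erase.mp hx
        simp only [Finset.mem_compl, Finset.mem_insert, Finset.mem_singleton]
        push_neg
        exact ⟨hxi, fun hxj => hjI (hxj ▸ hx)⟩
      · rw [Finset.card_erase_of_mem hi, I.2]
    rw [Finset.sum_eq_single_of_mem (⟨I.1.erase i, hL0mem⟩ :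
        {L // L ∈ Finset.powersetCard (m - 1) ({i, j}ᶜ : Finset (Fin n))})
        (Finset.mem_attach _ _)]
    · rw [if_pos ⟨Finset.insert_erase hi, by show insert j ((I.1).erase i) = J.1; rw [he, Finset.insert_erase hj]⟩,
        if_pos ⟨hi, hj, he⟩]
    · intro L _ hne
      rw [if_neg]
      rintro ⟨h1, h2⟩
      apply hne
      apply Subtype.ext
      show L.1 = I.1.erase i
      rw [← h1, Finset.erase_insert (hnotmem L).1]
  · rw [if_neg hC]
    apply Finset.sum_eq_zero
    intro L _
    rw [if_neg]
    rintro ⟨h1, h2⟩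
    apply hC
    refine ⟨h1 ▸ Finset.mem_insert_self i L.1, h2 ▸ Finset.mem_insert_self j L.1, ?_⟩
    rw [← h1, ← h2, Finset.erase_insert (hnotmem L).1, Finset.erase_insert (hnotmem L).2]

/-- Formula (m): the `m`-th exterior power of `t_{i,j}(ξ)` equals the product, over all
`(m-1)`-element subsets `L` of `{1,…,n} \ {i,j}`, of the elementary transvections
`t_{L∪{i}, L∪{j}}(sign(L,i,j)·ξ)`; in particular all the factors pairwise commute. -/
theorem extPow_m_transvection {R : Type*} [CommRing R] {n m : ℕ} (hn : m + 2 ≤ n) (hm : 1 ≤ m)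
    (i j : Fin n) (hij : i < j) (ξ : R) :
    ∃ hc : (((Finset.powersetCard (m - 1) ({i, j}ᶜ : Finset (Fin n))).attach : Finset _) :
        Set _).Pairwise (Function.onFun Commute (fGen hm i j ξ)),
      extPow n m (Matrix.transvection i j ξ) =
        (Finset.powersetCard (m - 1) ({i, j}ᶜ : Finset (Fin n))).attach.noncommProd
          (fGen hm i j ξ) hc := by
  have hij' : i ≠ j := ne_of_lt hij
  obtain ⟨hc, hprod⟩ := noncommProd_one_add
    (Finset.powersetCard (m - 1) ({i, j}ᶜ : Finset (Fin n))).attach (AMat hm i j ξ)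
    (fun a _ b _ => AMat_mul_zero hm hij' ξ a b)
  refine ⟨hc, ?_⟩
  show extPow n m (Matrix.transvection i j ξ) =
    (Finset.powersetCard (m - 1) ({i, j}ᶜ : Finset (Fin n))).attach.noncommProd
      (fun L => 1 + AMat hm i j ξ L) hc
  rw [hprod]
  ext I J
  rw [extPow_transvection_apply hm hij' ξ I J, Matrix.add_apply, Matrix.one_apply,
    Matrix.sum_apply, sum_AMat_apply hm hij' ξ I J]
end

section
/- The m-th exterior power of an elementary transvection t_{i,j}(ξ) is a product of at most binom(n−2, m−1) elementary transvections in GL_{binom(n,m)}(R). -/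
open Matrix

namespace ExtPowAux

variable {R : Type*} [CommRing R] {n m : ℕ}

/-- If some row of `f` hits a value outside `J`, the 0/1 submatrix has zero determinant. -/
lemma row_zero_det (f : Fin m → Fin n) (J : Idx n m) {x : Fin n} (hx : x ∉ J.1)
    {a : Fin m} (ha : f a = x) :
    ((1 : Matrix (Fin n) (Fin n) R).submatrix f ⇑(J.1.orderEmbOfFin J.2)).det = 0 := by
  apply Matrix.det_eq_zero_of_row_eq_zero a
  intro b
  have hne : f a ≠ J.1.orderEmbOfFin J.2 b := by
    intro hh
    have hmem := Finset.orderEmbOfFin_mem J.1 J.2 b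
    rw [← hh, ha] at hmem
    exact hx hmem
  simp [Matrix.one_apply, hne]

lemma exists_preimage (I : Idx n m) {x : Fin n} (hx : x ∈ I.1) :
    ∃ a, I.1.orderEmbOfFin I.2 a = x := by
  have : x ∈ Set.range ⇑(I.1.orderEmbOfFin I.2) := by
    rw [Finset.range_orderEmbOfFin]
    exact hx
  exact this

lemma det_one_sub (I J : Idx n m) :
    ((1 : Matrix (Fin n) (Fin n) R).submatrix ⇑(I.1.orderEmbOfFin I.2)
        ⇑(J.1.orderEmbOfFin J.2)).det = if I = J then (1 : R) else 0 := by
  rcases eq_or_ne I J with rfl | hIJ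
  · rw [if_pos rfl]
    have h1 : (1 : Matrix (Fin n) (Fin n) R).submatrix ⇑(I.1.orderEmbOfFin I.2)
        ⇑(I.1.orderEmbOfFin I.2) = 1 := by
      ext a b
      simp [Matrix.one_apply, (I.1.orderEmbOfFin I.2).injective.eq_iff]
    rw [h1, Matrix.det_one]
  · rw [if_neg hIJ]
    have hne : I.1 ≠ J.1 := fun h => hIJ (Subtype.ext h)
    have hns : ¬ I.1 ⊆ J.1 := fun hsub =>
      hne (Finset.eq_of_subset_of_card_le hsub (by rw [I.2, J.2]))
    obtain ⟨x, hxI, hxJ⟩ := Finset.not_subset.mp hns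
    obtain ⟨a, ha⟩ := exists_preimage I hxI
    exact row_zero_det _ J hxJ ha

lemma entry_eq (i j : Fin n) (hij : i ≠ j) (ξ : R) (I J : Idx n m)
    (h : ¬(i ∈ I.1 ∧ j ∉ I.1 ∧ J.1 = insert j (I.1.erase i))) :
    extPow n m (Matrix.transvection i j ξ) I J = if I = J then 1 else 0 := by
  show ((Matrix.transvection i j ξ).submatrix (⇑(I.1.orderEmbOfFin I.2))
      (⇑(J.1.orderEmbOfFin J.2))).det = _
  by_cases hiI : i ∈ I.1
  · set f : Fin m → Fin n := ⇑(I.1.orderEmbOfFin I.2) with hf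
    set g : Fin m → Fin n := ⇑(J.1.orderEmbOfFin J.2) with hg
    set M : Matrix (Fin m) (Fin m) R := (1 : Matrix (Fin n) (Fin n) R).submatrix f g with hM
    set v : Fin m → R := fun b => if j = g b then (1 : R) else 0 with hv
    clear_value f g M v
    have hfi : Function.Injective f := hf ▸ (I.1.orderEmbOfFin I.2).injective
    obtain ⟨a0, ha0⟩ : ∃ a, f a = i := hf ▸ exists_preimage I hiI
    have hsplit : (Matrix.transvection i j ξ).submatrix f g
        = M.updateRow a0 (M a0 + ξ • v) := by
      ext a b
      rcases eq_or_ne a a0 with rfl | ha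
      · rw [Matrix.updateRow_self]
        simp only [Matrix.submatrix_apply, Matrix.transvection, Matrix.add_apply, Pi.add_apply,
          Pi.smul_apply, smul_eq_mul, hM, hv, Matrix.submatrix_apply, ha0,
          Matrix.single, Matrix.of_apply, true_and]
        split_ifs <;> rw [ha0] <;> ring
      · rw [Matrix.updateRow_ne ha]
        have hia : ¬ (i = f a) := fun he => ha (hfi (he.symm.trans ha0.symm))
        simp [Matrix.transvection, Matrix.single, hia, hM]
    rw [hsplit, Matrix.det_updateRow_add, Matrix.updateRow_eq_self, Matrix.det_updateRow_smul]
    have hupd : M.updateRow a0 v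
        = (1 : Matrix (Fin n) (Fin n) R).submatrix (Function.update f a0 j) g := by
      ext a b
      rcases eq_or_ne a a0 with rfl | ha
      · rw [Matrix.updateRow_self, Matrix.submatrix_apply, Function.update_self]
        simp only [hv, Matrix.one_apply]
      · rw [Matrix.updateRow_ne ha, hM, Matrix.submatrix_apply, Matrix.submatrix_apply,
          Function.update_of_ne ha]
    rw [hupd]
    have h2 : ((1 : Matrix (Fin n) (Fin n) R).submatrix (Function.update f a0 j) g).det = 0 := by
      rw [hg]
      by_cases hjI : j ∈ I.1
      · obtain ⟨b0, hb0⟩ : ∃ a, f a = j := hf ▸ exists_preimage I hjI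
        have hab : b0 ≠ a0 := by
          intro he
          exact hij (by rw [← ha0, ← hb0, he])
        apply Matrix.det_zero_of_row_eq hab
        funext b
        rw [Matrix.submatrix_apply, Matrix.submatrix_apply, Function.update_of_ne hab, hb0,
          Function.update_self]
      · have hKne : insert j (I.1.erase i) ≠ J.1 := by
          intro he
          exact h ⟨hiI, hjI, he.symm⟩
        have hm1 : 1 ≤ m := I.2 ▸ Finset.card_pos.mpr ⟨i, hiI⟩
        have hKcard : (insert j (I.1.erase i)).card = m := by
          rw [Finset.card_insert_of_notMem (fun hh => hjI (Finset.mem_of_mem_erase hh)),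
            Finset.card_erase_of_mem hiI, I.2]
          omega
        have hns : ¬ insert j (I.1.erase i) ⊆ J.1 := fun hsub =>
          hKne (Finset.eq_of_subset_of_card_le hsub (by rw [hKcard, J.2]))
        obtain ⟨x, hxK, hxJ⟩ := Finset.not_subset.mp hns
        rcases Finset.mem_insert.mp hxK with rfl | hx
        · exact row_zero_det _ J hxJ (a := a0) (by simp)
        · obtain ⟨a, ha⟩ : ∃ a, f a = x := hf ▸ exists_preimage I (Finset.mem_of_mem_erase hx)
          have hne : a ≠ a0 := by
            intro he
            rw [he, ha0] at ha
            exact (Finset.mem_erase.mp hx).1 ha.symm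
          exact row_zero_det _ J hxJ (a := a) (by rw [Function.update_of_ne hne, ha])
    rw [h2, mul_zero, add_zero, hM, hf, hg]
    exact det_one_sub I J
  · have heq : (Matrix.transvection i j ξ).submatrix (⇑(I.1.orderEmbOfFin I.2))
        (⇑(J.1.orderEmbOfFin J.2))
        = (1 : Matrix (Fin n) (Fin n) R).submatrix (⇑(I.1.orderEmbOfFin I.2))
          (⇑(J.1.orderEmbOfFin J.2)) := by
      ext a b
      have hia : ¬ (i = I.1.orderEmbOfFin I.2 a) := by
        intro he
        exact hiI (he ▸ Finset.orderEmbOfFin_mem I.1 I.2 a)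
      simp [Matrix.transvection, Matrix.single, hia]
    rw [heq]
    exact det_one_sub I J

lemma prod_one_add_stdBasis {ι : Type*} [DecidableEq ι] [Fintype ι]
    (l : List (ι × ι × R)) (h : ∀ p ∈ l, ∀ q ∈ l, p.2.1 ≠ q.1) :
    (l.map fun p => (1 : Matrix ι ι R) + single p.1 p.2.1 p.2.2).prod
      = 1 + (l.map fun p => single p.1 p.2.1 p.2.2).sum := by
  induction l with
  | nil => simp
  | cons p l ih =>
    have h' : ∀ a ∈ l, ∀ q ∈ l, a.2.1 ≠ q.1 := fun a ha q hq =>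
      h a (List.mem_cons_of_mem _ ha) q (List.mem_cons_of_mem _ hq)
    have hz : single p.1 p.2.1 p.2.2
        * (l.map fun q => single q.1 q.2.1 q.2.2).sum = 0 := by
      have hml := List.sum_map_mul_left l (fun q : ι × ι × R => single q.1 q.2.1 q.2.2)
        (single p.1 p.2.1 p.2.2)
      rw [← hml]
      apply List.sum_eq_zero
      intro x hx
      rw [List.mem_map] at hx
      obtain ⟨q, hq, rfl⟩ := hx
      show single p.1 p.2.1 p.2.2 * single q.1 q.2.1 q.2.2 = 0
      exact Matrix.single_mul_single_of_ne (i := p.1) (j := p.2.1) (k := q.1) (c := p.2.2)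
        (d := q.2.2) (h := h p List.mem_cons_self q (List.mem_cons_of_mem _ hq))
    simp only [List.map_cons, List.prod_cons, List.sum_cons, ih h']
    rw [add_mul, one_mul, mul_add, mul_one, hz, add_zero]
    abel

end ExtPowAux

open ExtPowAux in
/-- The `m`-th exterior power of an elementary transvection `t_{i,j}(ξ)` is a product of at
most `binom(n-2, m-1)` elementary transvections in `GL_{binom(n,m)}(R)`. -/
theorem extPow_transvection_product {R : Type*} [CommRing R] {n m : ℕ} (hn : 3 ≤ n)
    (i j : Fin n) (hij : i ≠ j) (ξ : R) :
    ∃ l : List (Matrix (Idx n m) (Idx n m) R),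
      l.length ≤ (n - 2).choose (m - 1) ∧
      (∀ a ∈ l, ∃ (K L : Idx n m) (ζ : R), K ≠ L ∧ a = Matrix.transvection K L ζ) ∧
      extPow n m (Matrix.transvection i j ξ) = l.prod := by
  classical
  have hcard : ∀ I : Idx n m, i ∈ I.1 → j ∉ I.1 → (insert j (I.1.erase i)).card = m := by
    intro I hi hjm
    have hm : 1 ≤ m := I.2 ▸ Finset.card_pos.mpr ⟨i, hi⟩
    rw [Finset.card_insert_of_notMem (fun hh => hjm (Finset.mem_of_mem_erase hh)),
      Finset.card_erase_of_mem hi, I.2]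
    omega
  set S : Finset (Idx n m) := Finset.univ.filter (fun I => i ∈ I.1 ∧ j ∉ I.1) with hSdef
  have hmemS : ∀ I ∈ S, i ∈ I.1 ∧ j ∉ I.1 := fun I hI => (Finset.mem_filter.mp hI).2
  set σ : Idx n m → Idx n m := fun I =>
    if h : i ∈ I.1 ∧ j ∉ I.1 then ⟨insert j (I.1.erase i), hcard I h.1 h.2⟩ else I with hσdef
  have hσ : ∀ I ∈ S, (σ I).1 = insert j (I.1.erase i) := by
    intro I hI
    simp only [hσdef, dif_pos (hmemS I hI)]
  have hiσ : ∀ I ∈ S, i ∉ (σ I).1 := by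
    intro I hI
    rw [hσ I hI]
    intro hmem
    rcases Finset.mem_insert.mp hmem with he | he
    · exact hij he
    · exact (Finset.mem_erase.mp he).1 rfl
  set c : Idx n m → R := fun I => extPow n m (Matrix.transvection i j ξ) I (σ I) with hcdef
  set lp : List ((Idx n m) × (Idx n m) × R) := S.toList.map (fun I => (I, σ I, c I)) with hlp
  have hchain : ∀ p ∈ lp, ∀ q ∈ lp, p.2.1 ≠ q.1 := by
    intro p hp q hq
    rw [hlp, List.mem_map] at hp hq
    obtain ⟨I, hI, rfl⟩ := hp
    obtain ⟨I', hI', rfl⟩ := hq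
    rw [Finset.mem_toList] at hI hI'
    intro he
    have he' : σ I = I' := he
    exact hiσ I hI (he' ▸ (hmemS I' hI').1)
  refine ⟨lp.map (fun p => Matrix.transvection p.1 p.2.1 p.2.2), ?_, ?_, ?_⟩
  · rw [List.length_map, hlp, List.length_map, Finset.length_toList]
    -- card bound
    have hle := Finset.card_le_card_of_injOn (fun I : Idx n m => I.1.erase i)
      (t := Finset.powersetCard (m - 1) ((Finset.univ.erase i).erase j))
      (fun I hI => by
        obtain ⟨h1, h2⟩ := hmemS I hI
        rw [Finset.mem_coe, Finset.mem_powersetCard]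
        constructor
        · intro x hx
          obtain ⟨hxi, hxI⟩ := Finset.mem_erase.mp hx
          refine Finset.mem_erase.mpr ⟨?_, Finset.mem_erase.mpr ⟨hxi, Finset.mem_univ _⟩⟩
          intro he
          exact h2 (he ▸ hxI)
        · rw [Finset.card_erase_of_mem h1, I.2])
      (by
        intro I hI I' hI' hEq
        have h1 := (hmemS I (by exact hI)).1
        have h1' := (hmemS I' (by exact hI')).1
        apply Subtype.ext
        rw [← Finset.insert_erase h1, ← Finset.insert_erase h1']
        simp only at hEq
        rw [hEq])
    refine hle.trans ?_
    rw [Finset.card_powersetCard]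
    have hj' : j ∈ Finset.univ.erase i := Finset.mem_erase.mpr ⟨hij.symm, Finset.mem_univ _⟩
    rw [Finset.card_erase_of_mem hj', Finset.card_erase_of_mem (Finset.mem_univ i),
      Finset.card_univ, Fintype.card_fin]
    have hnn : n - 1 - 1 = n - 2 := by omega
    rw [hnn]
  · intro a ha
    rw [List.mem_map] at ha
    obtain ⟨p, hp, rfl⟩ := ha
    rw [hlp, List.mem_map] at hp
    obtain ⟨I, hI, rfl⟩ := hp
    rw [Finset.mem_toList] at hI
    refine ⟨I, σ I, c I, ?_, rfl⟩
    intro he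
    exact hiσ I hI (he ▸ (hmemS I hI).1)
  · have hkey : extPow n m (Matrix.transvection i j ξ)
        = 1 + ∑ I ∈ S, single I (σ I) (c I) := by
      funext I J
      have hsum : (∑ I' ∈ S, single I' (σ I') (c I')) I J
          = if I ∈ S ∧ J = σ I then c I else 0 := by
        rw [Matrix.sum_apply]
        by_cases hIS : I ∈ S
        · rw [Finset.sum_eq_single I
            (fun b _ hb => Matrix.single_apply_of_ne _ _ _ _ _ (fun hc => hb hc.1))
            (fun hni => absurd hIS hni)]
          rcases eq_or_ne J (σ I) with hJ | hJ
          · rw [if_pos ⟨hIS, hJ⟩, hJ, Matrix.single_apply_same]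
          · rw [if_neg (fun hc => hJ hc.2),
              Matrix.single_apply_of_ne _ _ _ _ _ (fun hc => hJ hc.2.symm)]
        · rw [if_neg (fun hc => hIS hc.1)]
          apply Finset.sum_eq_zero
          intro b hb
          exact Matrix.single_apply_of_ne _ _ _ _ _
            (fun hc => hIS (hc.1 ▸ hb))
      rw [Matrix.add_apply, hsum]
      by_cases hsp : I ∈ S ∧ J = σ I
      · rw [if_pos hsp]
        have hIJ : I ≠ J := by
          rintro rfl
          exact hiσ I hsp.1 (hsp.2 ▸ (hmemS I hsp.1).1)
        rw [Matrix.one_apply_ne hIJ, zero_add, hsp.2]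
      · rw [if_neg hsp, add_zero]
        have hnc : ¬ (i ∈ I.1 ∧ j ∉ I.1 ∧ J.1 = insert j (I.1.erase i)) := by
          rintro ⟨h1, h2, h3⟩
          have hIS : I ∈ S := Finset.mem_filter.mpr ⟨Finset.mem_univ _, h1, h2⟩
          exact hsp ⟨hIS, Subtype.ext (h3.trans (hσ I hIS).symm)⟩
        rw [entry_eq i j hij ξ I J hnc, Matrix.one_apply]
    have hprod := prod_one_add_stdBasis lp hchain
    have htv : lp.map (fun p => Matrix.transvection p.1 p.2.1 p.2.2)
        = lp.map (fun p => (1 : Matrix (Idx n m) (Idx n m) R) + single p.1 p.2.1 p.2.2) := by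
      simp only [Matrix.transvection]
    rw [htv, hprod, hkey, hlp, List.map_map]
    congr 1
    have := Finset.sum_map_toList S (fun I => single I (σ I) (c I))
    rw [← this]
    rfl
end

section
/- Let I, J be m-element subsets of {1,…,n} with I ≠ J, and let i, j ∈ {1,…,n} with i ≠ j. If i ∉ I and j ∉ J, then the elementary transvection t_{I,J}(ξ) in GL_{binom(n,m)}(R) commutes with ∧^m t_{j,i}(ζ) for all ξ, ζ ∈ R. -/
open Matrix

private lemma det_delta {R : Type*} [CommRing R] {n m : ℕ} (P Q : Idx n m) :
    ((1 : Matrix (Fin n) (Fin n) R).submatrix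
        (⇑(P.1.orderEmbOfFin P.2)) (⇑(Q.1.orderEmbOfFin Q.2))).det
      = if P = Q then 1 else 0 := by
  by_cases h : P = Q
  · subst h
    rw [if_pos rfl]
    have : (1 : Matrix (Fin n) (Fin n) R).submatrix
        (⇑(P.1.orderEmbOfFin P.2)) (⇑(P.1.orderEmbOfFin P.2)) = 1 := by
      ext a b
      simp [one_apply, (P.1.orderEmbOfFin P.2).injective.eq_iff]
    rw [this, det_one]
  · rw [if_neg h]
    have h1 : P.1 ≠ Q.1 := fun hh => h (Subtype.ext hh)
    have h2 : ¬ P.1 ⊆ Q.1 := by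
      intro hsub
      exact h1 (Finset.eq_of_subset_of_card_le hsub (by rw [P.2, Q.2]))
    obtain ⟨p, hpP, hpQ⟩ := Finset.not_subset.1 h2
    have hpP' : (p : Fin n) ∈ (P.1 : Set (Fin n)) := hpP
    rw [← Finset.range_orderEmbOfFin P.1 P.2] at hpP'
    obtain ⟨a, ha⟩ := hpP'
    apply det_eq_zero_of_row_eq_zero a
    intro b
    have : (P.1.orderEmbOfFin P.2 a : Fin n) ≠ Q.1.orderEmbOfFin Q.2 b := by
      rw [ha]; intro hc; exact hpQ (hc ▸ Finset.orderEmbOfFin_mem Q.1 Q.2 b)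
    simp [one_apply, this]

private lemma extPow_transvection_left {R : Type*} [CommRing R] {n m : ℕ}
    (i j : Fin n) (ζ : R) (P Q : Idx n m) (hjP : j ∉ P.1) :
    extPow n m (Matrix.transvection j i ζ) P Q = if P = Q then 1 else 0 := by
  rw [← det_delta P Q]
  unfold extPow
  congr 1
  ext a b
  have : (P.1.orderEmbOfFin P.2 a : Fin n) ≠ j := by
    intro hc; exact hjP (hc ▸ Finset.orderEmbOfFin_mem P.1 P.2 a)
  simp only [Matrix.transvection, Matrix.single, Matrix.add_apply, Matrix.of_apply,
    Matrix.submatrix_apply]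
  rw [if_neg (fun hc => (Ne.symm this) hc.1), add_zero]

private lemma extPow_transvection_right {R : Type*} [CommRing R] {n m : ℕ}
    (i j : Fin n) (ζ : R) (P Q : Idx n m) (hiQ : i ∉ Q.1) :
    extPow n m (Matrix.transvection j i ζ) P Q = if P = Q then 1 else 0 := by
  rw [← det_delta P Q]
  unfold extPow
  congr 1
  ext a b
  have : (Q.1.orderEmbOfFin Q.2 b : Fin n) ≠ i := by
    intro hc; exact hiQ (hc ▸ Finset.orderEmbOfFin_mem Q.1 Q.2 b)
  simp only [Matrix.transvection, Matrix.single, Matrix.add_apply, Matrix.of_apply,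
    Matrix.submatrix_apply]
  rw [if_neg (fun hc => (Ne.symm this) hc.2), add_zero]

/-- First type of commutation: if `i ∉ I` and `j ∉ J`, then the elementary transvection
`t_{I,J}(ξ)` commutes with `∧^m t_{j,i}(ζ)` for all `ξ, ζ ∈ R`. -/
theorem transvection_commute_extPow {R : Type*} [CommRing R] {n m : ℕ} (hn : m + 2 ≤ n)
    (I J : Idx n m) (hIJ : I ≠ J) (i j : Fin n) (hij : i ≠ j)
    (hiI : i ∉ I.1) (hjJ : j ∉ J.1) (ξ ζ : R) :
    Commute (Matrix.transvection I J ξ) (extPow n m (Matrix.transvection j i ζ)) := by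
  show Matrix.transvection I J ξ * _ = _ * Matrix.transvection I J ξ
  rw [Matrix.transvection, add_mul, mul_add, one_mul, mul_one]
  congr 1
  ext K L
  by_cases hK : K = I
  · subst hK
    rw [Matrix.single_mul_apply_same]
    by_cases hL : L = J
    · subst hL
      rw [Matrix.mul_single_apply_same,
        extPow_transvection_left i j ζ L L hjJ,
        extPow_transvection_right i j ζ K K hiI, if_pos rfl, if_pos rfl,
        mul_one, one_mul]
    · rw [Matrix.mul_single_apply_of_ne (hbj := hL),
        extPow_transvection_left i j ζ J L hjJ, if_neg (fun h => hL h.symm), mul_zero]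
  · rw [Matrix.single_mul_apply_of_ne (h := hK)]
    by_cases hL : L = J
    · subst hL
      rw [Matrix.mul_single_apply_same,
        extPow_transvection_right i j ζ K I hiI, if_neg hK, zero_mul]
    · rw [Matrix.mul_single_apply_of_ne (hbj := hL)]
end

section
/- Let I, J be distinct m-element subsets of {1,…,n} and i, j ∈ {1,…,n} with i ≠ j. Suppose i ∈ I, j ∉ I, i ∉ J, j ∉ J. Then the commutator [t_{I,J}(ξ), ∧^m t_{j,i}(ζ)] equals t_{Ĩ,J}(±ζξ) where Ĩ = (I\{i}) ∪ {j}, for some sign depending only on I, i, j. -/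
open Matrix

section Aux

variable {R : Type*} [CommRing R] {n m : ℕ}

/-- The "derivative" matrix `N` such that `∧^m t_{j,i}(ζ) = 1 + ζ • N`. -/
def NM (R : Type*) [CommRing R] {n m : ℕ} (i j : Fin n) : Matrix (Idx n m) (Idx n m) R :=
  fun K L =>
    if h : j ∈ K.1 then
      ((1 : Matrix (Fin n) (Fin n) R).submatrix
          (Function.update (⇑(K.1.orderEmbOfFin K.2)) ((K.1.orderIsoOfFin K.2).symm ⟨j, h⟩) i)
          (⇑(L.1.orderEmbOfFin L.2))).det
    else 0

lemma det_submatrix_one_zero (f : Fin m → Fin n) (L : Idx n m) {c : Fin n} (hc : c ∈ L.1)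
    (h : ∀ a, f a ≠ c) :
    ((1 : Matrix (Fin n) (Fin n) R).submatrix f (⇑(L.1.orderEmbOfFin L.2))).det = 0 := by
  obtain ⟨b, hb⟩ : ∃ b, L.1.orderEmbOfFin L.2 b = c := by
    have := L.1.range_orderEmbOfFin L.2
    have : c ∈ Set.range (L.1.orderEmbOfFin L.2) := by rw [this]; exact_mod_cast hc
    exact this
  refine det_eq_zero_of_column_eq_zero b fun a => ?_
  simp [hb, Matrix.one_apply, h a]

lemma det_submatrix_one_id (K L : Idx n m) :
    ((1 : Matrix (Fin n) (Fin n) R).submatrix (⇑(K.1.orderEmbOfFin K.2))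
      (⇑(L.1.orderEmbOfFin L.2))).det = if K = L then 1 else 0 := by
  split_ifs with h
  · subst h
    have : (1 : Matrix (Fin n) (Fin n) R).submatrix (⇑(K.1.orderEmbOfFin K.2))
        (⇑(K.1.orderEmbOfFin K.2)) = 1 := by
      ext a b
      simp [Matrix.one_apply, (K.1.orderEmbOfFin K.2).injective.eq_iff]
    rw [this, det_one]
  · have hne : K.1 ≠ L.1 := fun hh => h (Subtype.ext hh)
    obtain ⟨c, hcL, hcK⟩ : ∃ c ∈ L.1, c ∉ K.1 := by
      by_contra hcon
      push_neg at hcon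
      exact hne (Finset.eq_of_subset_of_card_le
        (fun x hx => by_contra fun hns => (hne (Finset.eq_of_subset_of_card_le hcon
          (by rw [K.2, L.2])).symm)) (by rw [K.2, L.2])).symm
    exact det_submatrix_one_zero _ L hcL fun a hfa => hcK (hfa ▸ Finset.orderEmbOfFin_mem _ _ _)
lemma extPow_transvection (i j : Fin n) (ζ : R) :
    extPow n m (Matrix.transvection j i ζ) = 1 + ζ • NM R i j := by
  ext K L
  rw [Matrix.add_apply, Matrix.smul_apply, Matrix.one_apply, smul_eq_mul]
  show ((Matrix.transvection j i ζ).submatrix (⇑(K.1.orderEmbOfFin K.2))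
      (⇑(L.1.orderEmbOfFin L.2))).det = _
  by_cases h : j ∈ K.1
  · set a₀ := (K.1.orderIsoOfFin K.2).symm ⟨j, h⟩ with ha₀def
    have ha₀ : K.1.orderEmbOfFin K.2 a₀ = j := by
      rw [← Finset.coe_orderIsoOfFin_apply, ha₀def, OrderIso.apply_symm_apply]
    set X := (1 : Matrix (Fin n) (Fin n) R).submatrix (⇑(K.1.orderEmbOfFin K.2))
        (⇑(L.1.orderEmbOfFin L.2)) with hX
    have key : (Matrix.transvection j i ζ).submatrix (⇑(K.1.orderEmbOfFin K.2))
        (⇑(L.1.orderEmbOfFin L.2)) =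
        Matrix.updateRow X a₀ (X a₀ + ζ • (fun b => (if i = L.1.orderEmbOfFin L.2 b then (1:R) else 0))) := by
      ext a b
      by_cases hab : a = a₀
      · subst hab
        simp only [Matrix.submatrix_apply, Matrix.transvection, Matrix.add_apply,
          Matrix.updateRow_self, Pi.add_apply, Pi.smul_apply, smul_eq_mul, hX,
          Matrix.single, Matrix.of_apply]
        by_cases hbi : i = L.1.orderEmbOfFin L.2 b <;> simp [hbi, ha₀]
      · have hja : K.1.orderEmbOfFin K.2 a ≠ j := fun hh => by
          exact hab ((K.1.orderEmbOfFin K.2).injective (by rw [hh, ha₀]))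
        simp only [Matrix.submatrix_apply, Matrix.transvection, Matrix.add_apply,
          Matrix.updateRow_ne hab, hX, Matrix.single, Matrix.of_apply]
        simp [Ne.symm hja]
    rw [key, Matrix.det_updateRow_add, Matrix.updateRow_eq_self, Matrix.det_updateRow_smul]
    have key2 : Matrix.updateRow X a₀ (fun b => (if i = L.1.orderEmbOfFin L.2 b then (1:R) else 0)) =
        (1 : Matrix (Fin n) (Fin n) R).submatrix
          (Function.update (⇑(K.1.orderEmbOfFin K.2)) a₀ i) (⇑(L.1.orderEmbOfFin L.2)) := by
      ext a b
      by_cases hab : a = a₀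
      · subst hab
        simp [Matrix.one_apply, Function.update_self]
      · rw [Matrix.updateRow_ne hab, Matrix.submatrix_apply, Function.update_of_ne hab]
        rfl
    rw [key2]
    rw [det_submatrix_one_id, NM, dif_pos h]
  · have key : (Matrix.transvection j i ζ).submatrix (⇑(K.1.orderEmbOfFin K.2))
        (⇑(L.1.orderEmbOfFin L.2)) = (1 : Matrix (Fin n) (Fin n) R).submatrix
          (⇑(K.1.orderEmbOfFin K.2)) (⇑(L.1.orderEmbOfFin L.2)) := by
      ext a b
      have hja : K.1.orderEmbOfFin K.2 a ≠ j := fun hh =>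
        h (hh ▸ Finset.orderEmbOfFin_mem _ _ _)
      simp only [Matrix.submatrix_apply, Matrix.transvection, Matrix.add_apply,
        Matrix.single, Matrix.of_apply]
      simp [Ne.symm hja]
    rw [key, det_submatrix_one_id, NM, dif_neg h]
    rcases eq_or_ne K L with rfl | hKL
    · simp
    · simp [hKL, fun hh : K = L => hKL hh]
lemma NM_apply_not_mem (i j : Fin n) (K L : Idx n m) (h : j ∉ K.1) : NM R i j K L = 0 :=
  dif_neg h

lemma NM_apply_mem_right {i j : Fin n} (hij : i ≠ j) (K L : Idx n m) (hL : j ∈ L.1) :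
    NM R i j K L = 0 := by
  rw [NM]
  split_ifs with h
  · set a₀ := (K.1.orderIsoOfFin K.2).symm ⟨j, h⟩ with ha₀def
    have ha₀ : K.1.orderEmbOfFin K.2 a₀ = j := by
      rw [← Finset.coe_orderIsoOfFin_apply, ha₀def, OrderIso.apply_symm_apply]
    apply det_submatrix_one_zero _ L hL
    intro a
    by_cases hab : a = a₀
    · subst hab; rw [Function.update_self]; exact hij
    · rw [Function.update_of_ne hab]
      exact fun hh => hab ((K.1.orderEmbOfFin K.2).injective (hh.trans ha₀.symm))
  · rfl

lemma NM_support {i j : Fin n} (hij : i ≠ j) (K L : Idx n m)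
    (hK : K.1 ≠ insert j (L.1.erase i)) : NM R i j K L = 0 := by
  rw [NM]
  split_ifs with h
  · by_contra hne
    set a₀ := (K.1.orderIsoOfFin K.2).symm ⟨j, h⟩ with ha₀def
    have ha₀ : K.1.orderEmbOfFin K.2 a₀ = j := by
      rw [← Finset.coe_orderIsoOfFin_apply, ha₀def, OrderIso.apply_symm_apply]
    set f' := Function.update (⇑(K.1.orderEmbOfFin K.2)) a₀ i with hf'
    have hcol : ∀ c ∈ L.1, ∃ a, f' a = c := by
      intro c hc
      by_contra hno
      push_neg at hno
      exact hne (det_submatrix_one_zero f' L hc hno)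
    have hrange : ∀ a, f' a ∈ insert i (K.1.erase j) := by
      intro a
      by_cases hab : a = a₀
      · subst hab; rw [hf', Function.update_self]; exact Finset.mem_insert_self _ _
      · rw [hf', Function.update_of_ne hab]
        refine Finset.mem_insert_of_mem (Finset.mem_erase.mpr ⟨?_, Finset.orderEmbOfFin_mem _ _ _⟩)
        exact fun hh => hab ((K.1.orderEmbOfFin K.2).injective (hh.trans ha₀.symm))
    have hsub : L.1 ⊆ insert i (K.1.erase j) := by
      intro c hc
      obtain ⟨a, ha⟩ := hcol c hc
      exact ha ▸ hrange a
    have hm1 : 1 ≤ m := by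
      have h0 : 0 < K.1.card := Finset.card_pos.mpr ⟨j, h⟩
      rw [K.2] at h0
      omega
    have hcard : (insert i (K.1.erase j)).card ≤ m := by
      refine le_trans (Finset.card_insert_le _ _) ?_
      rw [Finset.card_erase_of_mem h, K.2]
      omega
    have heq : L.1 = insert i (K.1.erase j) :=
      Finset.eq_of_subset_of_card_le hsub (by rw [L.2]; exact hcard)
    have hiK : i ∉ K.1 := by
      intro hiK
      have h1 : insert i (K.1.erase j) = K.1.erase j :=
        Finset.insert_eq_self.mpr (Finset.mem_erase.mpr ⟨hij, hiK⟩)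
      have h2 := L.2
      rw [heq, h1, Finset.card_erase_of_mem h, K.2] at h2
      omega
    apply hK
    have h1 : L.1.erase i = K.1.erase j := by
      rw [heq, Finset.erase_insert]
      exact fun hh => hiK (Finset.mem_of_mem_erase hh)
    rw [h1, Finset.insert_erase h]
  · rfl

lemma NM_tilde {i j : Fin n} (hij : i ≠ j) (I : Idx n m) (hiI : i ∈ I.1) (hjI : j ∉ I.1)
    (It : Idx n m) (hIt : It.1 = insert j (I.1.erase i)) :
    ∃ ε : R, (ε = 1 ∨ ε = -1) ∧ NM R i j It I = ε := by
  have hj : j ∈ It.1 := hIt ▸ Finset.mem_insert_self _ _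
  rw [NM, dif_pos hj]
  set a₀ := (It.1.orderIsoOfFin It.2).symm ⟨j, hj⟩ with ha₀def
  have ha₀ : It.1.orderEmbOfFin It.2 a₀ = j := by
    rw [← Finset.coe_orderIsoOfFin_apply, ha₀def, OrderIso.apply_symm_apply]
  set f' := Function.update (⇑(It.1.orderEmbOfFin It.2)) a₀ i with hf'
  have hiIt : i ∉ It.1 := by
    rw [hIt]
    simp [Finset.mem_insert, hij, Finset.mem_erase]
  have hrange : ∀ a, f' a ∈ I.1 := by
    intro a
    by_cases hab : a = a₀
    · subst hab; rw [hf', Function.update_self]; exact hiI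
    · rw [hf', Function.update_of_ne hab]
      have hmem : It.1.orderEmbOfFin It.2 a ∈ It.1 := Finset.orderEmbOfFin_mem _ _ _
      have hne : It.1.orderEmbOfFin It.2 a ≠ j :=
        fun hh => hab ((It.1.orderEmbOfFin It.2).injective (hh.trans ha₀.symm))
      have hmem2 : It.1.orderEmbOfFin It.2 a ∈ insert j (I.1.erase i) := by
        rw [← hIt]; exact hmem
      rcases Finset.mem_insert.mp hmem2 with h1 | h1
      · exact absurd h1 hne
      · exact Finset.mem_of_mem_erase h1
  have hinj : Function.Injective f' := by
    intro a a' haa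
    by_cases hab : a = a₀ <;> by_cases hab' : a' = a₀
    · rw [hab, hab']
    · exfalso
      rw [hf', hab, Function.update_self, Function.update_of_ne hab'] at haa
      exact hiIt (haa ▸ Finset.orderEmbOfFin_mem _ _ _)
    · exfalso
      rw [hf', hab', Function.update_self, Function.update_of_ne hab] at haa
      exact hiIt (haa ▸ Finset.orderEmbOfFin_mem _ _ _)
    · rw [hf', Function.update_of_ne hab, Function.update_of_ne hab'] at haa
      exact (It.1.orderEmbOfFin It.2).injective haa
  set σ : Fin m → Fin m := fun a => (I.1.orderIsoOfFin I.2).symm ⟨f' a, hrange a⟩ with hσ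
  have hσap : ∀ a, I.1.orderEmbOfFin I.2 (σ a) = f' a := by
    intro a
    rw [← Finset.coe_orderIsoOfFin_apply, hσ]
    simp
  have hσinj : Function.Injective σ := by
    intro a a' hh
    apply hinj
    rw [← hσap a, ← hσap a', hh]
  set σe : Equiv.Perm (Fin m) := Equiv.ofBijective σ (Finite.injective_iff_bijective.mp hσinj)
    with hσe
  have hmat : (1 : Matrix (Fin n) (Fin n) R).submatrix f' (⇑(I.1.orderEmbOfFin I.2)) =
      σe.permMatrix R := by
    ext a b
    rw [Equiv.Perm.permMatrix, PEquiv.toMatrix_toPEquiv_apply]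
    have hae : σe a = σ a := rfl
    rw [Matrix.submatrix_apply, ← hσap a, hae]
    simp [Matrix.one_apply, (I.1.orderEmbOfFin I.2).injective.eq_iff, Pi.single_apply, eq_comm]
  rw [hmat, Matrix.det_permutation]
  rcases Int.units_eq_one_or (Equiv.Perm.sign σe) with hs | hs <;> rw [hs]
  · exact ⟨1, Or.inl rfl, by simp⟩
  · exact ⟨-1, Or.inr rfl, by simp⟩

lemma comm_aux {A : Type*} [Ring A] (a b : A) (h1 : a * b = 0) (h2 : a * a = 0)
    (h3 : b * b = 0) : (1 + a) * (1 + b) * (1 - a) * (1 - b) = 1 - b * a := by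
  have e1 : (1 + a) * (1 + b) = 1 + a + b := by
    have : (1 + a) * (1 + b) = 1 + a + b + a * b := by noncomm_ring
    rw [this, h1, add_zero]
  have e2 : (1 - a) * (1 - b) = 1 - a - b := by
    have : (1 - a) * (1 - b) = 1 - a - b + a * b := by noncomm_ring
    rw [this, h1, add_zero]
  have e3 : (1 + a + b) * (1 - a - b) = 1 - b * a - (a * a + a * b + b * b) := by noncomm_ring
  calc (1 + a) * (1 + b) * (1 - a) * (1 - b)
      = ((1 + a) * (1 + b)) * ((1 - a) * (1 - b)) := by rw [mul_assoc]
    _ = (1 + a + b) * (1 - a - b) := by rw [e1, e2]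
    _ = 1 - b * a - (a * a + a * b + b * b) := e3
    _ = 1 - b * a := by rw [h1, h2, h3]; simp

end Aux

/-- Second type of commutation: if `i ∈ I`, `j ∉ I`, `i ∉ J`, `j ∉ J`, then the commutator
`[t_{I,J}(ξ), ∧^m t_{j,i}(ζ)] = t_{Ĩ,J}(±ζξ)` where `Ĩ = (I\{i}) ∪ {j}`, the sign `ε`
depending only on `I`, `i`, `j` (not on `ξ`, `ζ`).  The inverses
`t_{I,J}(ξ)⁻¹ = t_{I,J}(-ξ)` and `(∧^m t_{j,i}(ζ))⁻¹ = ∧^m t_{j,i}(-ζ)` are written out. -/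
theorem commutator_second_type {R : Type*} [CommRing R] {n m : ℕ} (hn : m + 2 ≤ n)
    (I J : Idx n m) (hIJ : I ≠ J) (i j : Fin n) (hij : i ≠ j)
    (hiI : i ∈ I.1) (hjI : j ∉ I.1) (hiJ : i ∉ J.1) (hjJ : j ∉ J.1) :
    ∃ ε : R, (ε = 1 ∨ ε = -1) ∧ ∀ ξ ζ : R,
      Matrix.transvection I J ξ * extPow n m (Matrix.transvection j i ζ) *
          Matrix.transvection I J (-ξ) * extPow n m (Matrix.transvection j i (-ζ)) =
        Matrix.transvection
          (⟨insert j (I.1.erase i), by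
            rw [Finset.card_insert_of_notMem (fun h => hjI (Finset.mem_of_mem_erase h)),
              Finset.card_erase_of_mem hiI, I.2]
            have : 0 < I.1.card := Finset.card_pos.mpr ⟨i, hiI⟩
            omega⟩ : Idx n m) J (ε * (ζ * ξ)) := by
  classical
  have hItcard : (insert j (I.1.erase i)).card = m := by
    rw [Finset.card_insert_of_notMem (fun h => hjI (Finset.mem_of_mem_erase h)),
      Finset.card_erase_of_mem hiI, I.2]
    have : 0 < I.1.card := Finset.card_pos.mpr ⟨i, hiI⟩
    omega
  set It : Idx n m := ⟨insert j (I.1.erase i), hItcard⟩ with hItd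
  obtain ⟨ε₀, hε₀, hNI⟩ := NM_tilde (R := R) hij I hiI hjI It rfl
  refine ⟨-ε₀, ?_, ?_⟩
  · rcases hε₀ with h | h
    · right; rw [h]
    · left; rw [h, neg_neg]
  intro ξ ζ
  set E := Matrix.single I J (1 : R) with hE
  set A := (NM R i j : Matrix (Idx n m) (Idx n m) R) with hA
  have hEA : E * A = 0 := by
    ext K L
    by_cases hK : K = I
    · subst hK
      rw [hE, hA, Matrix.single_mul_apply_same,
        NM_apply_not_mem i j J L hjJ, mul_zero, Matrix.zero_apply]
    · rw [hE, Matrix.single_mul_apply_of_ne _ _ _ _ _ hK, Matrix.zero_apply]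
  have hAA : A * A = 0 := by
    ext K L
    rw [Matrix.mul_apply, Matrix.zero_apply]
    refine Finset.sum_eq_zero fun M _ => ?_
    by_cases hM : j ∈ M.1
    · rw [hA, NM_apply_mem_right hij K M hM, zero_mul]
    · rw [hA, NM_apply_not_mem i j M L hM, mul_zero]
  have hAE : A * E = ε₀ • Matrix.single It J (1 : R) := by
    ext K L
    by_cases hL : L = J
    · subst hL
      rw [hE, Matrix.mul_single_apply_same, mul_one]
      by_cases hK : K = It
      · subst hK
        rw [hNI, Matrix.smul_apply, Matrix.single]
        simp
      · have hgoal : A K I = 0 := NM_support hij K I (fun hh => hK (Subtype.ext hh))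
        have hK' : It ≠ K := fun hh => hK hh.symm
        rw [hgoal, Matrix.smul_apply, Matrix.single]
        simp [hK']
    · have hL' : J ≠ L := fun hh => hL hh.symm
      rw [hE, Matrix.mul_single_apply_of_ne (hbj := hL), Matrix.smul_apply,
        Matrix.single]
      simp [hL']
  have h1 : (ξ • E) * (ζ • A) = 0 := by
    rw [smul_mul_assoc, mul_smul_comm, hEA, smul_zero, smul_zero]
  have h2 : (ξ • E) * (ξ • E) = 0 := by
    rw [smul_mul_assoc, mul_smul_comm, hE,
      Matrix.single_mul_single_of_ne (h := Ne.symm hIJ), smul_zero, smul_zero]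
  have h3 : (ζ • A) * (ζ • A) = 0 := by
    rw [smul_mul_assoc, mul_smul_comm, hAA, smul_zero, smul_zero]
  have hTr : ∀ (P : Idx n m) (c : R),
      Matrix.transvection (P : Idx n m) J c = 1 + c • Matrix.single P J (1 : R) := by
    intro P c
    rw [Matrix.transvection, Matrix.smul_single, smul_eq_mul, mul_one]
  rw [extPow_transvection, extPow_transvection, hTr I ξ, hTr I (-ξ), ← hA, ← hE]
  rw [show ((-ξ) • E : Matrix (Idx n m) (Idx n m) R) = -(ξ • E) from neg_smul ξ E,
    show ((-ζ) • A : Matrix (Idx n m) (Idx n m) R) = -(ζ • A) from neg_smul ζ A,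
    ← sub_eq_add_neg, ← sub_eq_add_neg]
  rw [comm_aux (ξ • E) (ζ • A) h1 h2 h3]
  rw [smul_mul_assoc, mul_smul_comm, hAE, hTr It (-ε₀ * (ζ * ξ))]
  rw [smul_smul, smul_smul, Matrix.smul_single, smul_eq_mul, mul_one,
    Matrix.smul_single, smul_eq_mul, mul_one, sub_eq_add_neg]
  congr 1
  have hstd : Matrix.single It J (-(ζ * ξ * ε₀)) =
      -Matrix.single It J (ζ * ξ * ε₀) := by
    ext a b
    simp only [Matrix.single, Matrix.of_apply, Matrix.neg_apply]
    split_ifs <;> simp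
  rw [show (-ε₀ * (ζ * ξ) : R) = -(ζ * ξ * ε₀) from by ring, hstd]
end

section
/- Let H ≤ GL_N(R) contain ∧^m E(n,R) with n ≥ 2m+1. If for distinct disjoint m-element subsets I, J of {1,…,n} and ξ ∈ R the transvection t_{I,J}(ξ) lies in H, then for any index j ∈ J and any j' ∉ I ∪ J the transvection t_{I, (J\{j})∪{j'}}(ξζ) lies in H for all ζ ∈ R. -/
open Matrix

/-- A matrix `x` "belongs" to a subgroup `H` of `GL ι R` if it is the underlying matrix of
some element of `H`. -/
def memGL {R : Type*} [CommRing R] {ι : Type*} [Fintype ι] [DecidableEq ι]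
    (H : Subgroup (GL ι R)) (x : Matrix ι ι R) : Prop :=
  ∃ g ∈ H, (g : Matrix ι ι R) = x

/-- The `m`-element subset obtained from `J` by replacing `j ∈ J` with `j' ∉ J`. -/
def swapIdx {n m : ℕ} (J : Idx n m) (j j' : Fin n) (hj : j ∈ J.1) (hj' : j' ∉ J.1) : Idx n m :=
  ⟨insert j' (J.1.erase j), by
    rw [Finset.card_insert_of_notMem (fun h => hj' (Finset.mem_of_mem_erase h)),
      Finset.card_erase_of_mem hj]
    have h1 : 0 < J.1.card := Finset.card_pos.mpr ⟨j, hj⟩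
    omega⟩

namespace SecondTypeAux

variable {R : Type*} [CommRing R] {n m : ℕ}

/-- The order embedding of an `Idx`. -/
def emb (K : Idx n m) : Fin m → Fin n := ⇑(K.1.orderEmbOfFin K.2)

lemma emb_inj (K : Idx n m) : Function.Injective (emb K) :=
  (K.1.orderEmbOfFin K.2).injective

lemma emb_mem (K : Idx n m) (p : Fin m) : emb K p ∈ K.1 :=
  Finset.orderEmbOfFin_mem _ _ _

lemma emb_surj (K : Idx n m) {x : Fin n} (hx : x ∈ K.1) : ∃ p, emb K p = x := by
  have h := Finset.range_orderEmbOfFin K.1 K.2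
  have : x ∈ Set.range (K.1.orderEmbOfFin K.2) := by rw [h]; exact hx
  exact this

lemma det_if_zero (f : Fin m → Fin n) (L : Idx n m) (x : Fin n) (hx : x ∈ L.1)
    (hfx : ∀ p, f p ≠ x) :
    (Matrix.of fun p q => if f p = emb L q then (1 : R) else 0).det = 0 := by
  obtain ⟨q, hq⟩ := emb_surj L hx
  refine det_eq_zero_of_column_eq_zero q fun p => ?_
  simp only [of_apply, hq]
  exact if_neg (hfx p)

lemma det_if_perm (f : Fin m → Fin n) (hf : Function.Injective f) (L : Idx n m)
    (h : ∀ p, f p ∈ L.1) :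
    ∃ ε : R, ε * ε = 1 ∧
      (Matrix.of fun p q => if f p = emb L q then (1 : R) else 0).det = ε := by
  set τ : Fin m → Fin m := fun p => (L.1.orderIsoOfFin L.2).symm ⟨f p, h p⟩ with hτdef
  have hτ : ∀ p, emb L (τ p) = f p := by
    intro p
    have := Finset.coe_orderIsoOfFin_apply L.1 L.2 (τ p)
    rw [hτdef] at this ⊢
    simp only [OrderIso.apply_symm_apply] at this
    exact this.symm
  have hτinj : Function.Injective τ := by
    intro a b hab
    apply hf
    rw [← hτ a, ← hτ b, hab]
  have hτbij : Function.Bijective τ := Finite.injective_iff_bijective.mp hτinj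
  set σ : Equiv.Perm (Fin m) := Equiv.ofBijective τ hτbij with hσdef
  have hσ : ∀ p, emb L (σ p) = f p := hτ
  have hM : (Matrix.of fun p q => if f p = emb L q then (1 : R) else 0) =
      σ.permMatrix R := by
    ext p q
    rw [Equiv.Perm.permMatrix, PEquiv.toMatrix_apply, Equiv.toPEquiv_apply, of_apply]
    have : (f p = emb L q) ↔ (q ∈ (some (σ p) : Option (Fin m))) := by
      rw [Option.mem_some_iff, ← hσ p, (emb_inj L).eq_iff, eq_comm]
    simp only [this]
  refine ⟨((Equiv.Perm.sign σ : ℤ) : R), ?_, ?_⟩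
  · have : ((Equiv.Perm.sign σ : ℤ) : R) * ((Equiv.Perm.sign σ : ℤ) : R)
        = (((Equiv.Perm.sign σ * Equiv.Perm.sign σ : ℤˣ) : ℤ) : R) := by push_cast; ring
    rw [this, Int.units_mul_self]
    norm_num
  · rw [hM, det_permutation]

lemma det_if_diag (K L : Idx n m) :
    (Matrix.of fun p q => if emb K p = emb L q then (1 : R) else 0).det
      = if K = L then 1 else 0 := by
  rcases eq_or_ne K L with rfl | h
  · rw [if_pos rfl]
    have : (Matrix.of fun p q => if emb K p = emb K q then (1 : R) else 0) = 1 := by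
      ext p q
      simp [one_apply, (emb_inj K).eq_iff]
    rw [this, det_one]
  · rw [if_neg h]
    obtain ⟨x, hxL, hxK⟩ : ∃ x ∈ L.1, x ∉ K.1 := by
      by_contra hc
      push_neg at hc
      have hsub : L.1 ⊆ K.1 := hc
      have : L.1 = K.1 := Finset.eq_of_subset_of_card_le hsub (by rw [K.2, L.2])
      exact h (Subtype.ext this.symm)
    exact det_if_zero (emb K) L x hxL fun p hp => hxK (hp ▸ emb_mem K p)

lemma transvection_apply (j j' a b : Fin n) (c : R) :
    Matrix.transvection j j' c a b
      = (if a = b then (1 : R) else 0) + (if j = a ∧ j' = b then c else 0) := by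
  rw [Matrix.transvection, Matrix.add_apply, Matrix.one_apply, Matrix.single]
  rfl

/-- rows not containing `j` look like rows of the identity -/
lemma extPow_row_no_j (c : R) (j j' : Fin n) (K L : Idx n m) (hjK : j ∉ K.1) :
    extPow n m (Matrix.transvection j j' c) K L = if K = L then 1 else 0 := by
  have hM : (Matrix.transvection j j' c).submatrix (emb K) (emb L)
      = Matrix.of fun p q => if emb K p = emb L q then (1 : R) else 0 := by
    ext p q
    rw [Matrix.submatrix_apply, transvection_apply, of_apply]
    have : ¬(j = emb K p ∧ j' = emb L q) := by
      rintro ⟨rfl, -⟩; exact hjK (emb_mem K p)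
    rw [if_neg this, add_zero]
  show ((Matrix.transvection j j' c).submatrix (emb K) (emb L)).det = _
  rw [hM, det_if_diag K L]

/-- columns not containing `j'` look like columns of the identity -/
lemma extPow_col_no_j' (c : R) (j j' : Fin n) (K L : Idx n m) (hj'L : j' ∉ L.1) :
    extPow n m (Matrix.transvection j j' c) K L = if K = L then 1 else 0 := by
  have hM : (Matrix.transvection j j' c).submatrix (emb K) (emb L)
      = Matrix.of fun p q => if emb K p = emb L q then (1 : R) else 0 := by
    ext p q
    rw [Matrix.submatrix_apply, transvection_apply, of_apply]
    have : ¬(j = emb K p ∧ j' = emb L q) := by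
      rintro ⟨-, rfl⟩; exact hj'L (emb_mem L q)
    rw [if_neg this, add_zero]
  show ((Matrix.transvection j j' c).submatrix (emb K) (emb L)).det = _
  rw [hM, det_if_diag K L]

lemma exists_mem_not_mem {K L : Idx n m} (h : K ≠ L) : ∃ x ∈ L.1, x ∉ K.1 := by
  by_contra hc
  push_neg at hc
  have hsub : L.1 ⊆ K.1 := hc
  have : L.1 = K.1 := Finset.eq_of_subset_of_card_le hsub (by rw [K.2, L.2])
  exact h (Subtype.ext this.symm)

lemma extPow_rowJ (j j' : Fin n) (J : Idx n m) (hj : j ∈ J.1) (hj' : j' ∉ J.1) :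
    ∃ ε : R, ε * ε = 1 ∧ ∀ (c : R) (L : Idx n m),
      extPow n m (Matrix.transvection j j' c) J L =
        (if J = L then 1 else 0) + c * (if L = swapIdx J j j' hj hj' then ε else 0) := by
  set p₀ : Fin m := (J.1.orderIsoOfFin J.2).symm ⟨j, hj⟩ with hp₀def
  have hp₀ : emb J p₀ = j := by
    have := Finset.coe_orderIsoOfFin_apply J.1 J.2 p₀
    rw [hp₀def, OrderIso.apply_symm_apply] at this
    exact this.symm
  have hembj : ∀ p : Fin m, emb J p = j ↔ p = p₀ := fun p =>
    ⟨fun h => emb_inj J (h.trans hp₀.symm), fun h => h ▸ hp₀⟩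
  set Jt := swapIdx J j j' hj hj' with hJt
  set f : Fin m → Fin n := fun p => if p = p₀ then j' else emb J p with hfdef
  have hfp₀ : f p₀ = j' := if_pos rfl
  have hfp : ∀ p, p ≠ p₀ → f p = emb J p := fun p hp => if_neg hp
  have hf : Function.Injective f := by
    intro a b hab
    by_cases ha : a = p₀ <;> by_cases hb : b = p₀
    · rw [ha, hb]
    · rw [ha, hfp₀, hfp b hb] at hab
      exact absurd (hab ▸ emb_mem J b) hj'
    · rw [hb, hfp₀, hfp a ha] at hab
      exact absurd (hab ▸ emb_mem J a) hj'
    · rw [hfp a ha, hfp b hb] at hab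
      exact emb_inj J hab
  have hmem : ∀ p, f p ∈ Jt.1 := by
    intro p
    by_cases hp : p = p₀
    · rw [hp, hfp₀, hJt]
      exact Finset.mem_insert_self _ _
    · rw [hfp p hp, hJt]
      refine Finset.mem_insert_of_mem (Finset.mem_erase.mpr ⟨?_, emb_mem J p⟩)
      exact fun h => hp ((hembj p).mp h)
  obtain ⟨ε, hε2, hdet⟩ := det_if_perm (R := R) f hf Jt hmem
  refine ⟨ε, hε2, fun c L => ?_⟩
  set M₁ : Matrix (Fin m) (Fin m) R :=
    Matrix.of fun p q => if emb J p = emb L q then (1 : R) else 0 with hM₁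
  set u : Fin m → R := fun q => if j' = emb L q then 1 else 0 with hu
  have hsub : (Matrix.transvection j j' c).submatrix (emb J) (emb L)
      = Matrix.updateRow M₁ p₀ (M₁ p₀ + c • u) := by
    ext p q
    rw [Matrix.submatrix_apply, transvection_apply]
    by_cases hp : p = p₀
    · subst hp
      rw [Matrix.updateRow_self, Pi.add_apply, Pi.smul_apply, smul_eq_mul, hM₁, hu]
      simp only [of_apply, hp₀, true_and, mul_ite, mul_one, mul_zero]
    · rw [Matrix.updateRow_ne hp, hM₁, of_apply]
      have : ¬(j = emb J p ∧ j' = emb L q) := by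
        rintro ⟨h1, -⟩
        exact hp ((hembj p).mp h1.symm)
      rw [if_neg this, add_zero]
  have hupd : Matrix.updateRow M₁ p₀ u
      = Matrix.of fun p q => if f p = emb L q then (1 : R) else 0 := by
    ext p q
    by_cases hp : p = p₀
    · subst hp
      rw [Matrix.updateRow_self, hu, of_apply, hfp₀]
    · rw [Matrix.updateRow_ne hp, hM₁, of_apply, of_apply, hfp p hp]
  have hcalc : extPow n m (Matrix.transvection j j' c) J L
      = M₁.det + c * (Matrix.updateRow M₁ p₀ u).det := by
    show ((Matrix.transvection j j' c).submatrix (emb J) (emb L)).det = _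
    rw [hsub, Matrix.det_updateRow_add, Matrix.updateRow_eq_self, Matrix.det_updateRow_smul]
  rw [hcalc, hM₁, det_if_diag J L, hupd]
  by_cases hL : L = Jt
  · rw [if_pos hL, hL, hdet]
  · rw [if_neg hL]
    obtain ⟨x, hxL, hxJt⟩ := exists_mem_not_mem (Ne.symm hL : Jt ≠ L)
    rw [det_if_zero f L x hxL fun p hp => hxJt (hp ▸ hmem p)]

end SecondTypeAux

open SecondTypeAux

/-- Let `n ≥ 2m+1` and `H ≤ GL_N(R)` contain `∧^m E(n,R)`.  If `I`, `J` are disjoint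
distinct `m`-element subsets, `t_{I,J}(ξ) ∈ H`, `j ∈ J` and `j' ∉ I ∪ J`, then
`t_{I, (J\{j})∪{j'}}(ξζ) ∈ H` for all `ζ ∈ R`. -/
theorem second_type_consequence {R : Type*} [CommRing R] {n m : ℕ}
    (hm : 2 ≤ m) (hn : 2 * m + 1 ≤ n) (H : Subgroup (GL (Idx n m) R))
    (hE : ∀ i j : Fin n, i ≠ j → ∀ ξ : R, memGL H (extPow n m (Matrix.transvection i j ξ)))
    (I J : Idx n m) (hIJ : I ≠ J) (hdisj : Disjoint I.1 J.1)
    (j j' : Fin n) (hj : j ∈ J.1) (hj' : j' ∉ I.1 ∪ J.1)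
    (ξ : R) (hξ : memGL H (Matrix.transvection I J ξ)) (ζ : R) :
    memGL H (Matrix.transvection I
      (swapIdx J j j' hj (fun h => hj' (Finset.mem_union_right _ h))) (ξ * ζ)) := by
  unfold memGL at hE hξ ⊢
  classical
  have hjJ' : j' ∉ J.1 := fun h => hj' (Finset.mem_union_right _ h)
  set Jt := swapIdx J j j' hj (fun h => hj' (Finset.mem_union_right _ h)) with hJtdef
  have hne : j ≠ j' := fun h => hjJ' (h ▸ hj)
  have hj'I : j' ∉ I.1 := fun h => hj' (Finset.mem_union_left _ h)
  have hJI : J ≠ I := fun h => hIJ h.symm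
  have hj'Jt : j' ∈ Jt.1 := Finset.mem_insert_self _ _
  have hJtI : Jt ≠ I := fun h => hj'I (h ▸ hj'Jt)
  have hJJt : J ≠ Jt := fun h => hjJ' (h ▸ hj'Jt)
  have hjJt : j ∉ Jt.1 := by
    intro h
    rcases Finset.mem_insert.mp h with h1 | h2
    · exact hne h1
    · exact (Finset.notMem_erase j J.1) h2
  obtain ⟨ε, hε2, hrow⟩ := extPow_rowJ (R := R) j j' J hj hjJ'
  set c : R := ε * ζ with hcdef
  obtain ⟨gA, hgA, hgAc⟩ := hE j j' hne c
  obtain ⟨gT, hgT, hgTc⟩ := hξ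
  refine ⟨gT * gA * gT⁻¹ * gA⁻¹,
    mul_mem (mul_mem (mul_mem hgT hgA) (inv_mem hgT)) (inv_mem hgA), ?_⟩
  set S : Matrix (Idx n m) (Idx n m) R := Matrix.single I J ξ with hSdef
  set S₁ : Matrix (Idx n m) (Idx n m) R := Matrix.single I Jt 1 with hS₁def
  set A : Matrix (Idx n m) (Idx n m) R := extPow n m (Matrix.transvection j j' c) with hAdef
  have hTc : (gT : Matrix (Idx n m) (Idx n m) R) = 1 + S := by
    rw [hgTc, Matrix.transvection]
  have hSS : S * S = 0 := Matrix.single_mul_single_of_ne _ _ _ _ hJI ξ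
  have hTinv : ((gT⁻¹ : GL (Idx n m) R) : Matrix (Idx n m) (Idx n m) R) = 1 - S := by
    have h1 : (gT : Matrix (Idx n m) (Idx n m) R) * (1 - S) = 1 := by
      rw [hTc]
      have : (1 + S) * (1 - S) = 1 - S * S := by noncomm_ring
      rw [this, hSS, sub_zero]
    calc ((gT⁻¹ : GL (Idx n m) R) : Matrix (Idx n m) (Idx n m) R)
        = ↑gT⁻¹ * ((gT : Matrix (Idx n m) (Idx n m) R) * (1 - S)) := by rw [h1, mul_one]
      _ = ((gT⁻¹ : GL (Idx n m) R) : Matrix (Idx n m) (Idx n m) R) * ↑gT * (1 - S) := by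
          rw [mul_assoc]
      _ = 1 - S := by
          rw [← Matrix.GeneralLinearGroup.coe_mul, inv_mul_cancel, Units.val_one, one_mul]
  have hA_col : ∀ K, A K I = if K = I then 1 else 0 := fun K =>
    extPow_col_no_j' c j j' K I hj'I
  have hA_rowJ : ∀ L, A J L = (if J = L then 1 else 0) + c * (if L = Jt then ε else 0) :=
    fun L => hrow c L
  have hA_rowJt : ∀ L, A Jt L = if Jt = L then 1 else 0 := fun L =>
    extPow_row_no_j c j j' Jt L hjJt
  have hAS : A * S = S := by
    ext K L
    by_cases hL : L = J
    · subst hL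
      rw [hSdef, Matrix.mul_single_apply_same, hA_col K]
      by_cases hK : K = I
      · subst hK; simp [Matrix.single]
      · have hKI : ¬(I = K) := fun h => hK h.symm
        simp [Matrix.single, hK, hKI]
    · have hLJ : ¬(J = L) := fun h => hL h.symm
      rw [hSdef, Matrix.mul_single_apply_of_ne _ _ _ _ _ hL]
      simp [Matrix.single, hLJ]
  have hSA : S * A = S + (ξ * c * ε) • S₁ := by
    ext K L
    by_cases hK : K = I
    · subst hK
      rw [Matrix.add_apply, hSdef, Matrix.single_mul_apply_same, hA_rowJ L]
      by_cases h1 : J = L <;> by_cases h2 : L = Jt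
      · exact absurd (h1.trans h2) hJJt
      · have h2' : ¬(Jt = L) := fun h => h2 h.symm
        simp [Matrix.single, hS₁def, h1, h2, h2']
      · have h2' : Jt = L := h2.symm
        simp [Matrix.single, hS₁def, h1, h2']
        ring
      · have h2' : ¬(Jt = L) := fun h => h2 h.symm
        simp [Matrix.single, hS₁def, h1, h2, h2']
    · have hKI : ¬(I = K) := fun h => hK h.symm
      rw [Matrix.add_apply, hSdef, Matrix.single_mul_apply_of_ne _ _ _ _ _ hK]
      simp [Matrix.single, hS₁def, hKI]
  have hS₁A : S₁ * A = S₁ := by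
    ext K L
    by_cases hK : K = I
    · subst hK
      rw [hS₁def, Matrix.single_mul_apply_same, hA_rowJt L]
      simp [Matrix.single]
    · have hKI : ¬(I = K) := fun h => hK h.symm
      rw [hS₁def, Matrix.single_mul_apply_of_ne _ _ _ _ _ hK]
      simp [Matrix.single, hKI]
  have h3 : ((gT : Matrix (Idx n m) (Idx n m) R)) * ((gA : Matrix (Idx n m) (Idx n m) R))
      * ((gT⁻¹ : GL (Idx n m) R) : Matrix (Idx n m) (Idx n m) R)
      = A + (ξ * c * ε) • S₁ := by
    rw [hTc, hgAc, hTinv]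
    have hexp : (1 + S) * A * (1 - S) = A - A * S + (S * A - S * (A * S)) := by
      noncomm_ring
    rw [hexp, hAS, hSA, hSS]
    abel
  have hAinv : A * ((gA⁻¹ : GL (Idx n m) R) : Matrix (Idx n m) (Idx n m) R) = 1 := by
    rw [← hgAc, ← Matrix.GeneralLinearGroup.coe_mul, mul_inv_cancel, Units.val_one]
  have hS₁inv : S₁ * ((gA⁻¹ : GL (Idx n m) R) : Matrix (Idx n m) (Idx n m) R) = S₁ := by
    conv_lhs => rw [← hS₁A]
    rw [mul_assoc, hAinv, mul_one]
  have hscal : ξ * c * ε = ξ * ζ := by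
    rw [hcdef]
    linear_combination ξ * ζ * hε2
  rw [Matrix.GeneralLinearGroup.coe_mul, Matrix.GeneralLinearGroup.coe_mul,
    Matrix.GeneralLinearGroup.coe_mul, h3, add_mul, smul_mul_assoc, hAinv, hS₁inv, hscal,
    Matrix.transvection, hS₁def, Matrix.smul_single, smul_eq_mul, mul_one]
end

section
/- For a commutative ring R with N ≥ 3 and an ideal A of R, the relative elementary group E(N,R,A), defined as the normal closure of E(N,A) in E(N,R), is generated by the elements z_{I,J}(ξ,ζ) = t_{J,I}(ζ) t_{I,J}(ξ) t_{J,I}(−ζ) for distinct indices I, J, ξ ∈ A, ζ ∈ R. -/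
open Matrix

/-- The elementary transvection `t_{I,J}(ξ) = e + ξ e_{I,J}` as an element of `GL ι R`. -/
def tGL {R : Type*} [CommRing R] {ι : Type*} [Fintype ι] [DecidableEq ι] {I J : ι}
    (h : I ≠ J) (ξ : R) : GL ι R where
  val := Matrix.transvection I J ξ
  inv := Matrix.transvection I J (-ξ)
  val_inv := by
    rw [Matrix.transvection_mul_transvection_same _ _ h, add_neg_cancel]
    simp [Matrix.transvection]
  inv_val := by
    rw [Matrix.transvection_mul_transvection_same _ _ h, neg_add_cancel]
    simp [Matrix.transvection]

/-- `E(N, A)`: the subgroup generated by all elementary transvections of level `A`. -/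
def elemSub (R : Type*) [CommRing R] (ι : Type*) [Fintype ι] [DecidableEq ι]
    (A : Ideal R) : Subgroup (GL ι R) :=
  Subgroup.closure {g | ∃ (I J : ι) (h : I ≠ J) (ξ : R), ξ ∈ A ∧ g = tGL h ξ}

/-- `E(N, R)`: the (absolute) elementary subgroup. -/
def elemSubFull (R : Type*) [CommRing R] (ι : Type*) [Fintype ι] [DecidableEq ι] :
    Subgroup (GL ι R) :=
  Subgroup.closure {g | ∃ (I J : ι) (h : I ≠ J) (ξ : R), g = tGL h ξ}

/-- The smallest subgroup containing `S` and normalized by `F`: the closure `S^F`. -/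
def closUnder {G : Type*} [Group G] (S F : Subgroup G) : Subgroup G :=
  Subgroup.closure {g | ∃ x ∈ S, ∃ f ∈ F, g = f * x * f⁻¹}

/-- `E(N, R, A)`: the relative elementary subgroup, the normal closure of `E(N,A)`
in `E(N,R)`. -/
def relElemSub (R : Type*) [CommRing R] (ι : Type*) [Fintype ι] [DecidableEq ι]
    (A : Ideal R) : Subgroup (GL ι R) :=
  closUnder (elemSub R ι A) (elemSubFull R ι)

/-- `∧^m E(n,R)`: the image of the elementary group `E(n,R)` under the Cauchy–Binet
homomorphism, as a subgroup of `GL_{binom(n,m)}(R)`. -/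
def wedgeElem (R : Type*) [CommRing R] (n m : ℕ) : Subgroup (GL (Idx n m) R) :=
  Subgroup.closure
    {g | ∃ (i j : Fin n) (_ : i ≠ j) (ξ : R),
      (g : Matrix (Idx n m) (Idx n m) R) = extPow n m (Matrix.transvection i j ξ)}

set_option maxHeartbeats 4000000

section VasersteinSuslinAux

variable {R : Type*} [CommRing R] {ι : Type*} [Fintype ι] [DecidableEq ι]

/-- The set of Vaserstein–Suslin generators `z_{I,J}(ξ,ζ)`. -/
def zSet (R : Type*) [CommRing R] (ι : Type*) [Fintype ι] [DecidableEq ι] (A : Ideal R) :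
    Set (GL ι R) :=
  {g : GL ι R | ∃ (I J : ι) (h : I ≠ J) (ξ : R), ξ ∈ A ∧ ∃ ζ : R,
      g = tGL h.symm ζ * tGL h ξ * tGL h.symm (-ζ)}

/-- The subgroup generated by the Vaserstein–Suslin generators. -/
def ZC (R : Type*) [CommRing R] (ι : Type*) [Fintype ι] [DecidableEq ι] (A : Ideal R) :
    Subgroup (GL ι R) := Subgroup.closure (zSet R ι A)

@[simp] lemma tGL_val {I J : ι} (h : I ≠ J) (a : R) :
    (tGL h a : Matrix ι ι R) = 1 + Matrix.single I J a := rfl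

lemma tGL_inv {I J : ι} (h : I ≠ J) (a : R) : (tGL h a)⁻¹ = tGL h (-a) := by
  ext : 1; rfl

lemma tGL_zero {I J : ι} (h : I ≠ J) : tGL h (0 : R) = 1 := by
  ext : 1
  show Matrix.transvection I J (0:R) = 1
  simp [Matrix.transvection]

variable {A : Ideal R}

lemma mem_zZC {i j : ι} (hij : i ≠ j) {ξ : R} (hξ : ξ ∈ A) (ζ : R) :
    tGL hij.symm ζ * tGL hij ξ * tGL hij.symm (-ζ) ∈ ZC R ι A :=
  Subgroup.subset_closure ⟨i, j, hij, ξ, hξ, ζ, rfl⟩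

lemma mem_tZC {i j : ι} (hij : i ≠ j) {ξ : R} (hξ : ξ ∈ A) : tGL hij ξ ∈ ZC R ι A := by
  have h := mem_zZC hij hξ 0
  simpa [tGL_zero] using h

lemma caseC1 {i j k l : ι} (hij : i ≠ j) (hkl : k ≠ l) (hki : k ≠ i) (hkj : k ≠ j)
    (hli : l ≠ i) (hlj : l ≠ j) (a ξ ζ : R) (hξ : ξ ∈ A) :
    tGL hkl a * (tGL hij.symm ζ * tGL hij ξ * tGL hij.symm (-ζ)) * tGL hkl (-a) ∈ ZC R ι A := by
  have e : tGL hkl a * (tGL hij.symm ζ * tGL hij ξ * tGL hij.symm (-ζ)) * tGL hkl (-a)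
      = tGL hij.symm ζ * tGL hij ξ * tGL hij.symm (-ζ) := by
    ext : 1
    push_cast [Units.val_mul]
    simp only [tGL_val, mul_add, add_mul, one_mul, mul_one,
      Matrix.single_mul_single_same, Matrix.single_mul_single_of_ne, ne_eq,
      hij, hkl, hki, hkj, hli, hlj, hij.symm, hkl.symm, hki.symm, hkj.symm, hli.symm, hlj.symm, not_false_iff, add_assoc, mul_zero, zero_mul, add_zero, zero_add, mul_neg, neg_mul]
    ext x y
    simp only [Matrix.add_apply, Matrix.single, Matrix.of_apply, Matrix.one_apply]
    split_ifs <;> simp_all <;> ring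
  rw [e]; exact mem_zZC hij hξ ζ

lemma caseC2 {i j : ι} (hij : i ≠ j) (a ξ ζ : R) (hξ : ξ ∈ A) :
    tGL hij.symm a * (tGL hij.symm ζ * tGL hij ξ * tGL hij.symm (-ζ)) * tGL hij.symm (-a)
      ∈ ZC R ι A := by
  have e : tGL hij.symm a * (tGL hij.symm ζ * tGL hij ξ * tGL hij.symm (-ζ)) * tGL hij.symm (-a)
      = tGL hij.symm (a + ζ) * tGL hij ξ * tGL hij.symm (-(a + ζ)) := by
    ext : 1
    push_cast [Units.val_mul]
    simp only [tGL_val, mul_add, add_mul, one_mul, mul_one,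
      Matrix.single_mul_single_same, Matrix.single_mul_single_of_ne, ne_eq,
      hij, hij.symm, not_false_iff, add_assoc, mul_zero, zero_mul, add_zero, zero_add, mul_neg, neg_mul]
    ext x y
    simp only [Matrix.add_apply, Matrix.single, Matrix.of_apply, Matrix.one_apply]
    split_ifs <;> simp_all <;> ring
  rw [e]; exact mem_zZC hij hξ (a + ζ)

lemma caseC4 {i j m : ι} (hij : i ≠ j) (him : i ≠ m) (hjm : j ≠ m) (a ξ ζ : R) (hξ : ξ ∈ A) :
    tGL him a * (tGL hij.symm ζ * tGL hij ξ * tGL hij.symm (-ζ)) * tGL him (-a) ∈ ZC R ι A := by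
  have e : tGL him a * (tGL hij.symm ζ * tGL hij ξ * tGL hij.symm (-ζ)) * tGL him (-a)
      = (tGL hij.symm ζ * tGL hij ξ * tGL hij.symm (-ζ)) * tGL him (ξ*ζ*a)
        * tGL hjm (ζ*(ξ*ζ*a)) := by
    ext : 1
    push_cast [Units.val_mul]
    simp only [tGL_val, mul_add, add_mul, one_mul, mul_one,
      Matrix.single_mul_single_same, Matrix.single_mul_single_of_ne, ne_eq,
      hij, him, hjm, hij.symm, him.symm, hjm.symm, not_false_iff, add_assoc, mul_zero, zero_mul, add_zero, zero_add, mul_neg, neg_mul]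
    ext x y
    simp only [Matrix.add_apply, Matrix.single, Matrix.of_apply, Matrix.one_apply]
    split_ifs <;> simp_all <;> ring
  rw [e]
  exact mul_mem (mul_mem (mem_zZC hij hξ ζ)
      (mem_tZC him (Ideal.mul_mem_right _ _ (Ideal.mul_mem_right _ _ hξ))))
    (mem_tZC hjm (Ideal.mul_mem_left _ _ (Ideal.mul_mem_right _ _ (Ideal.mul_mem_right _ _ hξ))))

lemma caseC5 {i j m : ι} (hij : i ≠ j) (him : i ≠ m) (hjm : j ≠ m) (a ξ ζ : R) (hξ : ξ ∈ A) :
    tGL hjm a * (tGL hij.symm ζ * tGL hij ξ * tGL hij.symm (-ζ)) * tGL hjm (-a) ∈ ZC R ι A := by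
  have e : tGL hjm a * (tGL hij.symm ζ * tGL hij ξ * tGL hij.symm (-ζ)) * tGL hjm (-a)
      = (tGL hij.symm ζ * tGL hij ξ * tGL hij.symm (-ζ)) * tGL him (-(ξ*a))
        * tGL hjm (-(ζ*(ξ*a))) := by
    ext : 1
    push_cast [Units.val_mul]
    simp only [tGL_val, mul_add, add_mul, one_mul, mul_one,
      Matrix.single_mul_single_same, Matrix.single_mul_single_of_ne, ne_eq,
      hij, him, hjm, hij.symm, him.symm, hjm.symm, not_false_iff, add_assoc, mul_zero, zero_mul, add_zero, zero_add, mul_neg, neg_mul]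
    ext x y
    simp only [Matrix.add_apply, Matrix.single, Matrix.of_apply, Matrix.one_apply]
    split_ifs <;> simp_all <;> ring
  rw [e]
  exact mul_mem (mul_mem (mem_zZC hij hξ ζ)
      (mem_tZC him (neg_mem (Ideal.mul_mem_right _ _ hξ))))
    (mem_tZC hjm (neg_mem (Ideal.mul_mem_left _ _ (Ideal.mul_mem_right _ _ hξ))))

lemma caseC6 {i j m : ι} (hij : i ≠ j) (him : i ≠ m) (hjm : j ≠ m) (a ξ ζ : R) (hξ : ξ ∈ A) :
    tGL him.symm a * (tGL hij.symm ζ * tGL hij ξ * tGL hij.symm (-ζ)) * tGL him.symm (-a)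
      ∈ ZC R ι A := by
  have e : tGL him.symm a * (tGL hij.symm ζ * tGL hij ξ * tGL hij.symm (-ζ)) * tGL him.symm (-a)
      = (tGL hij.symm ζ * tGL hij ξ * tGL hij.symm (-ζ)) * tGL hjm.symm (a*ξ)
        * tGL him.symm (-(a*ξ*ζ)) := by
    ext : 1
    push_cast [Units.val_mul]
    simp only [tGL_val, mul_add, add_mul, one_mul, mul_one,
      Matrix.single_mul_single_same, Matrix.single_mul_single_of_ne, ne_eq,
      hij, him, hjm, hij.symm, him.symm, hjm.symm, not_false_iff, add_assoc, mul_zero, zero_mul, add_zero, zero_add, mul_neg, neg_mul]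
    ext x y
    simp only [Matrix.add_apply, Matrix.single, Matrix.of_apply, Matrix.one_apply]
    split_ifs <;> simp_all <;> ring
  rw [e]
  exact mul_mem (mul_mem (mem_zZC hij hξ ζ)
      (mem_tZC hjm.symm (Ideal.mul_mem_left _ _ hξ)))
    (mem_tZC him.symm (neg_mem (Ideal.mul_mem_right _ _ (Ideal.mul_mem_left _ _ hξ))))

lemma caseC7 {i j m : ι} (hij : i ≠ j) (him : i ≠ m) (hjm : j ≠ m) (a ξ ζ : R) (hξ : ξ ∈ A) :
    tGL hjm.symm a * (tGL hij.symm ζ * tGL hij ξ * tGL hij.symm (-ζ)) * tGL hjm.symm (-a)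
      ∈ ZC R ι A := by
  have e : tGL hjm.symm a * (tGL hij.symm ζ * tGL hij ξ * tGL hij.symm (-ζ)) * tGL hjm.symm (-a)
      = (tGL hij.symm ζ * tGL hij ξ * tGL hij.symm (-ζ)) * tGL hjm.symm (a*(ζ*ξ))
        * tGL him.symm (-(a*(ζ*ξ)*ζ)) := by
    ext : 1
    push_cast [Units.val_mul]
    simp only [tGL_val, mul_add, add_mul, one_mul, mul_one,
      Matrix.single_mul_single_same, Matrix.single_mul_single_of_ne, ne_eq,
      hij, him, hjm, hij.symm, him.symm, hjm.symm, not_false_iff, add_assoc, mul_zero, zero_mul, add_zero, zero_add, mul_neg, neg_mul]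
    ext x y
    simp only [Matrix.add_apply, Matrix.single, Matrix.of_apply, Matrix.one_apply]
    split_ifs <;> simp_all <;> ring
  rw [e]
  exact mul_mem (mul_mem (mem_zZC hij hξ ζ)
      (mem_tZC hjm.symm (Ideal.mul_mem_left _ _ (Ideal.mul_mem_left _ _ hξ))))
    (mem_tZC him.symm (neg_mem (Ideal.mul_mem_right _ _
      (Ideal.mul_mem_left _ _ (Ideal.mul_mem_left _ _ hξ)))))

lemma caseS1 {i j h : ι} (hij : i ≠ j) (hih : i ≠ h) (hjh : j ≠ h) (β c ζ : R) (hβ : β ∈ A) :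
    (tGL hih.symm (-ζ) * tGL hjh.symm c) * tGL hih β
      * (tGL hih.symm (-ζ) * tGL hjh.symm c)⁻¹ ∈ ZC R ι A := by
  rw [_root_.mul_inv_rev, tGL_inv, tGL_inv, neg_neg]
  have e : tGL hih.symm (-ζ) * tGL hjh.symm c * tGL hih β * (tGL hjh.symm (-c) * tGL hih.symm ζ)
      = (tGL hih.symm (-ζ) * tGL hih β * tGL hih.symm (-(-ζ))) * tGL hij (-(β*c))
        * tGL hjh.symm (ζ*(β*c)) := by
    ext : 1
    push_cast [Units.val_mul]
    simp only [tGL_val, mul_add, add_mul, one_mul, mul_one,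
      Matrix.single_mul_single_same, Matrix.single_mul_single_of_ne, ne_eq,
      hij, hih, hjh, hij.symm, hih.symm, hjh.symm, not_false_iff, add_assoc, mul_zero, zero_mul, add_zero, zero_add, mul_neg, neg_mul]
    ext x y
    simp only [Matrix.add_apply, Matrix.single, Matrix.of_apply, Matrix.one_apply]
    split_ifs <;> simp_all <;> ring
  rw [← mul_assoc] at e ⊢
  rw [e]
  exact mul_mem (mul_mem (mem_zZC hih hβ (-ζ))
      (mem_tZC hij (neg_mem (Ideal.mul_mem_right _ _ hβ))))
    (mem_tZC hjh.symm (Ideal.mul_mem_left _ _ (Ideal.mul_mem_right _ _ hβ)))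

lemma caseS2 {i j h : ι} (hij : i ≠ j) (hih : i ≠ h) (hjh : j ≠ h) (β c ζ : R) (hβ : β ∈ A) :
    (tGL hih.symm (-ζ) * tGL hjh.symm c) * tGL hjh β
      * (tGL hih.symm (-ζ) * tGL hjh.symm c)⁻¹ ∈ ZC R ι A := by
  rw [_root_.mul_inv_rev, tGL_inv, tGL_inv, neg_neg]
  have e : tGL hih.symm (-ζ) * tGL hjh.symm c * tGL hjh β * (tGL hjh.symm (-c) * tGL hih.symm ζ)
      = tGL hih.symm (-ζ) * (tGL hjh.symm c * tGL hjh β * tGL hjh.symm (-c))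
        * tGL hih.symm (-(-ζ)) := by
    ext : 1
    push_cast [Units.val_mul]
    simp only [tGL_val, mul_add, add_mul, one_mul, mul_one,
      Matrix.single_mul_single_same, Matrix.single_mul_single_of_ne, ne_eq,
      hij, hih, hjh, hij.symm, hih.symm, hjh.symm, not_false_iff, add_assoc, mul_zero, zero_mul, add_zero, zero_add, mul_neg, neg_mul]
    ext x y
    simp only [Matrix.add_apply, Matrix.single, Matrix.of_apply, Matrix.one_apply]
    split_ifs <;> simp_all <;> ring
  rw [← mul_assoc] at e ⊢
  rw [e]
  exact caseC5 hjh hij.symm hih.symm (-ζ) β c hβ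

lemma caseC3 {i j h : ι} (hij : i ≠ j) (hih : i ≠ h) (hjh : j ≠ h) (a ξ ζ : R) (hξ : ξ ∈ A) :
    tGL hij a * (tGL hij.symm ζ * tGL hij ξ * tGL hij.symm (-ζ)) * tGL hij (-a) ∈ ZC R ι A := by
  have e : tGL hij a * (tGL hij.symm ζ * tGL hij ξ * tGL hij.symm (-ζ)) * tGL hij (-a)
      = (tGL hih ξ * tGL hjh (ζ*ξ) * tGL hih (a*(ζ*ξ)))
        * ((tGL hih.symm (-ζ) * tGL hjh.symm (1+ζ*a))
          * (tGL hih (-(a*(ζ*ξ))) * tGL hjh (-(ζ*ξ)) * tGL hih (-ξ))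
          * (tGL hih.symm (-ζ) * tGL hjh.symm (1+ζ*a))⁻¹) := by
    rw [_root_.mul_inv_rev, tGL_inv, tGL_inv, neg_neg]
    ext : 1
    push_cast [Units.val_mul]
    simp only [tGL_val, mul_add, add_mul, one_mul, mul_one,
      Matrix.single_mul_single_same, Matrix.single_mul_single_of_ne, ne_eq,
      hij, hih, hjh, hij.symm, hih.symm, hjh.symm, not_false_iff, add_assoc, mul_zero, zero_mul, add_zero, zero_add, mul_neg, neg_mul]
    ext x y
    simp only [Matrix.add_apply, Matrix.single, Matrix.of_apply, Matrix.one_apply]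
    split_ifs <;> simp_all <;> ring
  rw [e]
  have hU : tGL hih ξ * tGL hjh (ζ*ξ) * tGL hih (a*(ζ*ξ)) ∈ ZC R ι A :=
    mul_mem (mul_mem (mem_tZC hih hξ) (mem_tZC hjh (Ideal.mul_mem_left _ _ hξ)))
      (mem_tZC hih (Ideal.mul_mem_left _ _ (Ideal.mul_mem_left _ _ hξ)))
  refine mul_mem hU ?_
  set V := tGL hih.symm (-ζ) * tGL hjh.symm (1+ζ*a) with hV
  have e2 : V * (tGL hih (-(a*(ζ*ξ))) * tGL hjh (-(ζ*ξ)) * tGL hih (-ξ)) * V⁻¹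
      = (V * tGL hih (-(a*(ζ*ξ))) * V⁻¹) * (V * tGL hjh (-(ζ*ξ)) * V⁻¹)
        * (V * tGL hih (-ξ) * V⁻¹) := by
    group
  rw [e2]
  refine mul_mem (mul_mem ?_ ?_) ?_
  · exact caseS1 hij hih hjh _ _ _ (neg_mem (Ideal.mul_mem_left _ _ (Ideal.mul_mem_left _ _ hξ)))
  · exact caseS2 hij hih hjh _ _ _ (neg_mem (Ideal.mul_mem_left _ _ hξ))
  · exact caseS1 hij hih hjh _ _ _ (neg_mem hξ)

lemma exists_third (hcard : 3 ≤ Fintype.card ι) (i j : ι) : ∃ h : ι, h ≠ i ∧ h ≠ j := by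
  by_contra hc
  push_neg at hc
  have hsub : (Finset.univ : Finset ι) ⊆ {i, j} := by
    intro x _
    simp only [Finset.mem_insert, Finset.mem_singleton]
    rcases eq_or_ne x i with hx | hx
    · exact Or.inl hx
    · exact Or.inr (hc x hx)
  have h1 := Finset.card_le_card hsub
  rw [Finset.card_univ] at h1
  have h2 : ({i, j} : Finset ι).card ≤ 2 := by
    refine le_trans (Finset.card_insert_le _ _) ?_
    simp
  omega

lemma coreZ (hcard : 3 ≤ Fintype.card ι) {k l i j : ι} (hkl : k ≠ l) (hij : i ≠ j)
    (a ξ ζ : R) (hξ : ξ ∈ A) :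
    tGL hkl a * (tGL hij.symm ζ * tGL hij ξ * tGL hij.symm (-ζ)) * tGL hkl (-a) ∈ ZC R ι A := by
  by_cases hki : k = i
  · subst hki
    by_cases hlj : l = j
    · subst hlj
      obtain ⟨h, hhi, hhj⟩ := exists_third hcard k l
      exact caseC3 hij hhi.symm hhj.symm a ξ ζ hξ
    · exact caseC4 hij hkl (Ne.symm hlj) a ξ ζ hξ
  · by_cases hkj : k = j
    · subst hkj
      by_cases hli : l = i
      · subst hli
        exact caseC2 hij a ξ ζ hξ
      · exact caseC5 hij (Ne.symm hli) hkl a ξ ζ hξ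
    · by_cases hli : l = i
      · subst hli
        exact caseC6 hij (Ne.symm hkl) (Ne.symm hkj) a ξ ζ hξ
      · by_cases hlj : l = j
        · subst hlj
          exact caseC7 hij (Ne.symm hki) (Ne.symm hkl) a ξ ζ hξ
        · exact caseC1 hij hkl hki hkj hli hlj a ξ ζ hξ

lemma conj_t_mem (hcard : 3 ≤ Fintype.card ι) {k l : ι} (hkl : k ≠ l) (a : R) {x : GL ι R}
    (hx : x ∈ ZC R ι A) : tGL hkl a * x * (tGL hkl a)⁻¹ ∈ ZC R ι A := by
  refine Subgroup.closure_induction ?_ ?_ ?_ ?_ hx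
  · rintro g ⟨i, j, hij, ξ, hξ, ζ, rfl⟩
    rw [tGL_inv]
    exact coreZ hcard hkl hij a ξ ζ hξ
  · simpa using one_mem (ZC R ι A)
  · intro u v _ _ pu pv
    have e : tGL hkl a * (u * v) * (tGL hkl a)⁻¹
        = (tGL hkl a * u * (tGL hkl a)⁻¹) * (tGL hkl a * v * (tGL hkl a)⁻¹) := by group
    rw [e]; exact mul_mem pu pv
  · intro u _ pu
    have e : tGL hkl a * u⁻¹ * (tGL hkl a)⁻¹ = (tGL hkl a * u * (tGL hkl a)⁻¹)⁻¹ := by group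
    rw [e]; exact inv_mem pu

lemma conj_full_mem (hcard : 3 ≤ Fintype.card ι) {f : GL ι R} (hf : f ∈ elemSubFull R ι)
    {x : GL ι R} (hx : x ∈ ZC R ι A) : f * x * f⁻¹ ∈ ZC R ι A := by
  have main : ∀ y ∈ ZC R ι A, f * y * f⁻¹ ∈ ZC R ι A ∧ f⁻¹ * y * f ∈ ZC R ι A := by
    refine Subgroup.closure_induction ?_ ?_ ?_ ?_ hf
    · rintro g ⟨i, j, hij, ξ, rfl⟩
      intro y hy
      constructor
      · exact conj_t_mem hcard hij ξ hy
      · have h2 := conj_t_mem hcard hij (-ξ) hy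
        rw [tGL_inv, neg_neg] at h2
        rw [tGL_inv]
        exact h2
    · intro y hy
      constructor <;> simpa using hy
    · intro u v _ _ pu pv y hy
      constructor
      · have h1 := (pv y hy).1
        have h2 := (pu _ h1).1
        have e : u * v * y * (u * v)⁻¹ = u * (v * y * v⁻¹) * u⁻¹ := by group
        rw [e]; exact h2
      · have h1 := (pu y hy).2
        have h2 := (pv _ h1).2
        have e : (u * v)⁻¹ * y * (u * v) = v⁻¹ * (u⁻¹ * y * u) * v := by group
        rw [e]; exact h2
    · intro u _ pu y hy
      constructor
      · have h1 := (pu y hy).2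
        rw [inv_inv]
        exact h1
      · have h1 := (pu y hy).1
        rw [inv_inv]
        exact h1
  exact (main x hx).1

end VasersteinSuslinAux

/-- Vaserstein–Suslin: for `N ≥ 3`, the relative elementary group `E(N,R,A)` is generated
by the elements `z_{I,J}(ξ,ζ) = t_{J,I}(ζ) t_{I,J}(ξ) t_{J,I}(−ζ)`, `ξ ∈ A`, `ζ ∈ R`. -/
theorem vaserstein_suslin {R : Type*} [CommRing R] {N : ℕ} (hN : 3 ≤ N) (A : Ideal R) :
    relElemSub R (Fin N) A =
      Subgroup.closure {g : GL (Fin N) R |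
        ∃ (I J : Fin N) (h : I ≠ J) (ξ : R), ξ ∈ A ∧ ∃ ζ : R,
          g = tGL h.symm ζ * tGL h ξ * tGL h.symm (-ζ)} := by
  have hcard : 3 ≤ Fintype.card (Fin N) := by simpa using hN
  show relElemSub R (Fin N) A = ZC R (Fin N) A
  apply le_antisymm
  · have hEA : elemSub R (Fin N) A ≤ ZC R (Fin N) A := by
      refine (Subgroup.closure_le _).mpr ?_
      rintro g ⟨i, j, hij, ξ, hξ, rfl⟩
      exact mem_tZC hij hξ
    show closUnder (elemSub R (Fin N) A) (elemSubFull R (Fin N)) ≤ ZC R (Fin N) A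
    refine (Subgroup.closure_le _).mpr ?_
    rintro g ⟨x, hx, f, hf, rfl⟩
    exact conj_full_mem hcard hf (hEA hx)
  · refine (Subgroup.closure_le _).mpr ?_
    rintro g ⟨i, j, hij, ξ, hξ, ζ, rfl⟩
    refine Subgroup.subset_closure ?_
    refine ⟨tGL hij ξ, Subgroup.subset_closure ⟨i, j, hij, ξ, hξ, rfl⟩,
      tGL hij.symm ζ, Subgroup.subset_closure ⟨j, i, hij.symm, ζ, rfl⟩, ?_⟩
    rw [tGL_inv]
end
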